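/- arXiv:math/0211409 — 5 statements merged into one kernel-verified Lean document; each statement's English description precedes it below -/
import Mathlib

section
/- Let ξ = (ξ_t)_{t≥0} be a real Lévy process such that E[e^{χ ξ_1}] = 1 for some χ > 0 and ξ_t → −∞ almost surely as t → +∞. Then the all-time supremum S_∞ := sup_{t ≥ 0} ξ_t is finite almost surely, and E[e^{α S_∞}] < ∞ for every α with 0 ≤ α < χ. -/
open MeasureTheory ProbabilityTheory Filter Set

/-- A real Lévy process on `[0, ∞)` (indexed by `ℝ`, only times `≥ 0` matter):
measurable, starts at `0` a.s., has independent and stationary increments,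
and almost surely càdlàg sample paths on `[0, ∞)`. -/
def IsLevyProcess {Ω : Type*} [MeasurableSpace Ω] (P : Measure Ω) (ξ : ℝ → Ω → ℝ) : Prop :=
  (∀ t : ℝ, Measurable (ξ t)) ∧
  Measurable (Function.uncurry ξ) ∧
  (∀ᵐ ω ∂P, ξ 0 ω = 0) ∧
  -- independent increments
  (∀ (n : ℕ) (t : ℕ → ℝ), Monotone t → t 0 = 0 →
    iIndepFun
      (fun i : Fin n => fun ω => ξ (t (i.1 + 1)) ω - ξ (t i.1) ω) P) ∧
  -- stationary increments
  (∀ s t : ℝ, 0 ≤ s → 0 ≤ t →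
    Measure.map (fun ω => ξ (t + s) ω - ξ t ω) P = Measure.map (ξ s) P) ∧
  -- almost surely càdlàg paths on `[0, ∞)`
  (∀ᵐ ω ∂P, ∀ t : ℝ, 0 ≤ t →
    ContinuousWithinAt (fun s => ξ s ω) (Set.Ici t) t ∧
    (0 < t → ∃ l : ℝ, Tendsto (fun s => ξ s ω) (nhdsWithin t (Set.Iio t)) (nhds l)))

section aux
set_option linter.unusedSectionVars false
variable {Ω : Type*} [MeasurableSpace Ω] {P : Measure Ω} [IsProbabilityMeasure P]
  {ξ : ℝ → Ω → ℝ} {χ : ℝ}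

private lemma measurable_expfun (χ : ℝ) :
    Measurable fun y : ℝ => ENNReal.ofReal (Real.exp (χ * y)) :=
  ((measurable_id.const_mul χ).exp).ennreal_ofReal

private lemma vec_indep {j : ℕ} {η : Fin (j+1) → Ω → ℝ}
    (hmeas : ∀ i, Measurable (η i))
    (hind : iIndepFun η P) :
    IndepFun (fun ω (i : Fin j) => η i.castSucc ω) (η (Fin.last j)) P := by
  classical
  have h1 := hind.indepFun_finset (Finset.univ.filter fun i => i ≠ Fin.last j) {Fin.last j}
    (by simp [Finset.disjoint_right]) hmeas
  have hmem : ∀ i : Fin j, i.castSucc ∈ Finset.univ.filter fun i => i ≠ Fin.last j := by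
    intro i
    simp [(Fin.castSucc_lt_last i).ne]
  have h2 := h1.comp
    (φ := fun v (i : Fin j) => v ⟨i.castSucc, hmem i⟩)
    (ψ := fun v => v ⟨Fin.last j, Finset.mem_singleton_self _⟩)
    (_mγ' := (inferInstance : MeasurableSpace ℝ))
    (measurable_pi_lambda _ fun i => measurable_pi_apply _)
    (measurable_pi_apply _)
  exact h2

private lemma indep_comp {j : ℕ} {η : Fin (j+1) → Ω → ℝ}
    (hmeas : ∀ i, Measurable (η i)) (hind : iIndepFun η P)
    {φ : (Fin j → ℝ) → ENNReal} {ψ : ℝ → ENNReal} (hφ : Measurable φ) (hψ : Measurable ψ) :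
    ∫⁻ ω, φ (fun i => η i.castSucc ω) * ψ (η (Fin.last j) ω) ∂P
      = (∫⁻ ω, φ (fun i => η i.castSucc ω) ∂P) * ∫⁻ ω, ψ (η (Fin.last j) ω) ∂P := by
  have h := (vec_indep hmeas hind).comp hφ hψ
  have h2 := lintegral_mul_eq_lintegral_mul_lintegral_of_indepFun
    (hφ.comp (measurable_pi_lambda _ fun i => hmeas i.castSucc)) (hψ.comp (hmeas _)) h
  simpa [Function.comp] using h2

private lemma telescope (f : ℕ → ℝ) (n : ℕ) :
    ∑ i : Fin n, (f (i.1 + 1) - f i.1) = f n - f 0 := by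
  rw [Fin.sum_univ_eq_sum_range fun i => f (i+1) - f i]
  exact Finset.sum_range_sub f n

private lemma lint_congr_zero (hzero : ∀ᵐ ω ∂P, ξ 0 ω = 0) (g : ℝ → ENNReal) (t : ℝ) :
    ∫⁻ ω, g (ξ t ω - ξ 0 ω) ∂P = ∫⁻ ω, g (ξ t ω) ∂P :=
  lintegral_congr_ae (hzero.mono fun ω hω => by dsimp only; rw [hω, sub_zero])

private lemma stat_lint (hξ : IsLevyProcess P ξ) {s t : ℝ} (hs : 0 ≤ s) (ht : 0 ≤ t) :
    ∫⁻ ω, ENNReal.ofReal (Real.exp (χ * (ξ (t + s) ω - ξ t ω))) ∂P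
      = ∫⁻ ω, ENNReal.ofReal (Real.exp (χ * ξ s ω)) ∂P := by
  have hmap := hξ.2.2.2.2.1 s t hs ht
  rw [← lintegral_map (g := fun ω => ξ (t + s) ω - ξ t ω) (measurable_expfun χ) ((hξ.1 _).sub (hξ.1 _)), hmap,
    lintegral_map (measurable_expfun χ) (hξ.1 s)]

private lemma grid_moment (hξ : IsLevyProcess P ξ) {h : ℝ} (hh : 0 ≤ h) (m : ℕ) :
    ∫⁻ ω, ENNReal.ofReal (Real.exp (χ * (ξ ((m : ℝ) * h) ω - ξ 0 ω))) ∂P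
      = (∫⁻ ω, ENNReal.ofReal (Real.exp (χ * ξ h ω)) ∂P) ^ m := by
  induction m with
  | zero => simp
  | succ m ih =>
    have hmono : Monotone (fun i : ℕ => (i : ℝ) * h) := fun a b hab =>
      mul_le_mul_of_nonneg_right (Nat.cast_le.2 hab) hh
    have hind := hξ.2.2.2.1 (m+1) (fun i => (i : ℝ) * h) hmono (by simp)
    set η : Fin (m+1) → Ω → ℝ :=
      fun i ω => ξ (((i.1 + 1 : ℕ) : ℝ) * h) ω - ξ ((i.1 : ℝ) * h) ω with hη
    have hmeasη : ∀ i, Measurable (η i) := fun i => (hξ.1 _).sub (hξ.1 _)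
    have hkey := indep_comp hmeasη hind
      (φ := fun v => ENNReal.ofReal (Real.exp (χ * ∑ i, v i)))
      (ψ := fun y => ENNReal.ofReal (Real.exp (χ * y)))
      (((Finset.measurable_sum Finset.univ fun i _ =>
        measurable_pi_apply i).const_mul χ).exp.ennreal_ofReal)
      (measurable_expfun χ)
    have hsum : ∀ ω, (∑ i : Fin m, η i.castSucc ω) = ξ ((m : ℝ) * h) ω - ξ 0 ω := by
      intro ω
      have := telescope (fun n => ξ ((n : ℝ) * h) ω) m
      exact this.trans (by simp)
    have hlastval : ∀ ω, η (Fin.last m) ω = ξ (((m+1 : ℕ) : ℝ) * h) ω - ξ ((m : ℝ) * h) ω := by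
      intro ω; rfl
    have hprodpt : ∀ ω,
        ENNReal.ofReal (Real.exp (χ * ∑ i : Fin m, η i.castSucc ω)) *
          ENNReal.ofReal (Real.exp (χ * η (Fin.last m) ω))
        = ENNReal.ofReal (Real.exp (χ * (ξ (((m+1 : ℕ) : ℝ) * h) ω - ξ 0 ω))) := by
      intro ω
      rw [hsum, hlastval, ← ENNReal.ofReal_mul (Real.exp_nonneg _), ← Real.exp_add]
      ring_nf
    have hstep : ∫⁻ ω, ENNReal.ofReal (Real.exp (χ * η (Fin.last m) ω)) ∂P
        = ∫⁻ ω, ENNReal.ofReal (Real.exp (χ * ξ h ω)) ∂P := by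
      have hc : ((m + 1 : ℕ) : ℝ) * h = (m : ℝ) * h + h := by push_cast; ring
      have := stat_lint (χ := χ) hξ hh (by positivity : (0:ℝ) ≤ (m : ℝ) * h)
      rw [← this]
      apply lintegral_congr fun ω => ?_
      rw [hlastval, hc]
    calc ∫⁻ ω, ENNReal.ofReal (Real.exp (χ * (ξ (((m+1 : ℕ)) * h) ω - ξ 0 ω))) ∂P
        = ∫⁻ ω, ENNReal.ofReal (Real.exp (χ * ∑ i : Fin m, η i.castSucc ω)) *
            ENNReal.ofReal (Real.exp (χ * η (Fin.last m) ω)) ∂P := by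
          exact lintegral_congr fun ω => (hprodpt ω).symm
      _ = (∫⁻ ω, ENNReal.ofReal (Real.exp (χ * ∑ i : Fin m, η i.castSucc ω)) ∂P) *
            ∫⁻ ω, ENNReal.ofReal (Real.exp (χ * η (Fin.last m) ω)) ∂P := hkey
      _ = (∫⁻ ω, ENNReal.ofReal (Real.exp (χ * ξ h ω)) ∂P) ^ m *
            ∫⁻ ω, ENNReal.ofReal (Real.exp (χ * ξ h ω)) ∂P := by
          rw [hstep, ← ih]
          congr 1
          exact lintegral_congr fun ω => by rw [hsum]
      _ = (∫⁻ ω, ENNReal.ofReal (Real.exp (χ * ξ h ω)) ∂P) ^ (m+1) := (pow_succ _ m).symm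

private lemma grid_maximal (hξ : IsLevyProcess P ξ) (hχ : 0 < χ) {h : ℝ} (hh : 0 ≤ h)
    (hJ : ∫⁻ ω, ENNReal.ofReal (Real.exp (χ * ξ h ω)) ∂P = 1) (N : ℕ) (x : ℝ) :
    P {ω | ∃ j ≤ N, ξ ((j : ℝ) * h) ω - ξ 0 ω > x}
      ≤ ENNReal.ofReal (Real.exp (-(χ * x))) := by
  classical
  set g : ℝ → ENNReal := fun y => ENNReal.ofReal (Real.exp (χ * y)) with hg_def
  have hg : Measurable g := measurable_expfun χ
  set F : ℕ → Set Ω := fun j =>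
    {ω | ξ ((j : ℝ) * h) ω - ξ 0 ω > x ∧ ∀ i < j, ξ ((i : ℝ) * h) ω - ξ 0 ω ≤ x} with hF_def
  have hFmeas : ∀ j, MeasurableSet (F j) := by
    intro j
    have : F j = {ω | x < ξ ((j : ℝ) * h) ω - ξ 0 ω} ∩
        ⋂ i ∈ Finset.range j, {ω | ξ ((i : ℝ) * h) ω - ξ 0 ω ≤ x} := by
      ext ω
      simp [hF_def, Finset.mem_range]
    rw [this]
    exact (measurableSet_lt measurable_const ((hξ.1 _).sub (hξ.1 _))).inter
      (MeasurableSet.biInter (Set.to_countable _)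
        fun i _ => measurableSet_le ((hξ.1 _).sub (hξ.1 _)) measurable_const)
  have hFdisj : Pairwise (Function.onFun Disjoint F) := by
    have key : ∀ a b : ℕ, a < b → Disjoint (F a) (F b) := by
      intro a b hab
      rw [Set.disjoint_left]
      rintro ω ⟨ha, _⟩ ⟨_, hb⟩
      exact absurd (hb a hab) (not_le.2 ha)
    intro a b hab
    rcases hab.lt_or_gt with h' | h'
    · exact key a b h'
    · exact (key b a h').symm
  have hcover : {ω | ∃ j ≤ N, ξ ((j : ℝ) * h) ω - ξ 0 ω > x}
      ⊆ ⋃ j ∈ Finset.range (N+1), F j := by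
    rintro ω ⟨j, hjN, hj⟩
    have hex : ∃ n : ℕ, ξ ((n : ℝ) * h) ω - ξ 0 ω > x := ⟨j, hj⟩
    refine Set.mem_biUnion (Finset.mem_range.2 (Nat.lt_succ_of_le
      ((Nat.find_min' hex hj).trans hjN))) ⟨Nat.find_spec hex, fun i hi => ?_⟩
    exact not_lt.1 fun hcon => Nat.find_min hex hi hcon
  have hkey : ∀ j ≤ N, P (F j) ≤ ENNReal.ofReal (Real.exp (-(χ * x))) *
      ∫⁻ ω in F j, g (ξ ((N : ℝ) * h) ω - ξ 0 ω) ∂P := by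
    intro j hjN
    set t : ℕ → ℝ := fun i => if i ≤ j then (i : ℝ) * h else (N : ℝ) * h with ht_def
    have hmono : Monotone t := by
      intro a b hab
      rcases le_or_gt a j with ha | ha <;> rcases le_or_gt b j with hb | hb
      · simp only [ht_def, if_pos ha, if_pos hb]
        exact mul_le_mul_of_nonneg_right (Nat.cast_le.2 hab) hh
      · simp only [ht_def, if_pos ha, if_neg (not_le.2 hb)]
        exact mul_le_mul_of_nonneg_right (Nat.cast_le.2 (ha.trans hjN)) hh
      · omega
      · simp [ht_def, not_le.2 ha, not_le.2 hb]
    have ht0 : t 0 = 0 := by simp [ht_def]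
    have hind := hξ.2.2.2.1 (j+1) t hmono ht0
    set η : Fin (j+1) → Ω → ℝ := fun i ω => ξ (t (i.1 + 1)) ω - ξ (t i.1) ω with hη
    have hmeasη : ∀ i, Measurable (η i) := fun i => (hξ.1 _).sub (hξ.1 _)
    set pS : (Fin j → ℝ) → ℕ → ℝ :=
      fun v i => ∑ m ∈ Finset.range i, if hm : m < j then v ⟨m, hm⟩ else 0 with hpS
    have hpSmeas : ∀ i, Measurable fun v : Fin j → ℝ => pS v i := by
      intro i
      apply Finset.measurable_sum
      intro m _
      by_cases hm : m < j
      · simpa [hm] using measurable_pi_apply (⟨m, hm⟩ : Fin j)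
      · simpa [hm] using measurable_const
    set B : Set (Fin j → ℝ) := {v | pS v j > x ∧ ∀ i < j, pS v i ≤ x} with hB
    have hBmeas : MeasurableSet B := by
      have : B = {v | x < pS v j} ∩ ⋂ i ∈ Finset.range j, {v | pS v i ≤ x} := by
        ext v; simp [hB, Finset.mem_range]
      rw [this]
      exact (measurableSet_lt measurable_const (hpSmeas j)).inter
        (MeasurableSet.biInter (Set.to_countable _)
          fun i _ => measurableSet_le (hpSmeas i) measurable_const)
    have hps : ∀ ω, ∀ i ≤ j, pS (fun i : Fin j => η i.castSucc ω) i
        = ξ ((i : ℝ) * h) ω - ξ 0 ω := by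
      intro ω i hij
      have h1 : ∀ m ∈ Finset.range i,
          (if hm : m < j then η (⟨m, hm⟩ : Fin j).castSucc ω else 0)
          = ξ (((m + 1 : ℕ) : ℝ) * h) ω - ξ ((m : ℝ) * h) ω := by
        intro m hm
        have hmi : m < i := Finset.mem_range.1 hm
        have hmj : m < j := lt_of_lt_of_le hmi hij
        rw [dif_pos hmj]
        have e1 : t (m + 1) = ((m + 1 : ℕ) : ℝ) * h := if_pos (by omega)
        have e2 : t m = (m : ℝ) * h := if_pos (by omega)
        simp [hη, e1, e2]
      calc pS (fun i : Fin j => η i.castSucc ω) i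
          = ∑ m ∈ Finset.range i, (ξ (((m + 1 : ℕ) : ℝ) * h) ω - ξ ((m : ℝ) * h) ω) :=
            Finset.sum_congr rfl h1
        _ = ξ ((i : ℝ) * h) ω - ξ (((0 : ℕ) : ℝ) * h) ω :=
            Finset.sum_range_sub (fun n => ξ ((n : ℝ) * h) ω) i
        _ = ξ ((i : ℝ) * h) ω - ξ 0 ω := by norm_num
    have hVB : ∀ ω, ((fun i : Fin j => η i.castSucc ω) ∈ B) ↔ ω ∈ F j := by
      intro ω
      simp only [hB, Set.mem_setOf_eq, hF_def]
      constructor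
      · rintro ⟨h1, h2⟩
        refine ⟨by rwa [hps ω j le_rfl] at h1, fun i hi => ?_⟩
        rw [← hps ω i (le_of_lt hi)]; exact h2 i hi
      · rintro ⟨h1, h2⟩
        refine ⟨by rwa [hps ω j le_rfl], fun i hi => ?_⟩
        rw [hps ω i (le_of_lt hi)]; exact h2 i hi
    have hφmeas : Measurable (B.indicator (1 : (Fin j → ℝ) → ENNReal)) :=
      measurable_one.indicator hBmeas
    have hkey2 := indep_comp hmeasη hind (φ := B.indicator 1) (ψ := g) hφmeas hg
    have hiFpt : ∀ ω, B.indicator (1 : (Fin j → ℝ) → ENNReal) (fun i : Fin j => η i.castSucc ω)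
        = (F j).indicator (fun _ => (1 : ENNReal)) ω := by
      intro ω
      by_cases hω : ω ∈ F j
      · rw [Set.indicator_of_mem ((hVB ω).2 hω), Set.indicator_of_mem hω]; rfl
      · rw [Set.indicator_of_notMem (fun hc => hω ((hVB ω).1 hc)),
          Set.indicator_of_notMem hω]
    have hlast : ∀ ω, η (Fin.last j) ω = ξ ((N : ℝ) * h) ω - ξ ((j : ℝ) * h) ω := by
      intro ω
      have e1 : t (j + 1) = (N : ℝ) * h := if_neg (by omega)
      have e2 : t j = (j : ℝ) * h := if_pos le_rfl
      simp [hη, e1, e2]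
    have hstat1 : ∫⁻ ω, g (η (Fin.last j) ω) ∂P = 1 := by
      have hjN' : ((j : ℝ)) * h + ((N - j : ℕ) : ℝ) * h = (N : ℝ) * h := by
        rw [Nat.cast_sub hjN]; ring
      have hst := stat_lint (χ := χ) (s := ((N - j : ℕ) : ℝ) * h) (t := (j : ℝ) * h) hξ
        (mul_nonneg (Nat.cast_nonneg _) hh) (mul_nonneg (Nat.cast_nonneg _) hh)
      have h2 : ∫⁻ ω, g (ξ (((N - j : ℕ) : ℝ) * h) ω) ∂P = 1 := by
        rw [← lint_congr_zero hξ.2.2.1 g, grid_moment hξ hh (N - j), hJ, one_pow]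
      calc ∫⁻ ω, g (η (Fin.last j) ω) ∂P
          = ∫⁻ ω, g (ξ ((j : ℝ) * h + ((N - j : ℕ) : ℝ) * h) ω - ξ ((j : ℝ) * h) ω) ∂P :=
            lintegral_congr fun ω => by rw [hlast, hjN']
        _ = ∫⁻ ω, g (ξ (((N - j : ℕ) : ℝ) * h) ω) ∂P := hst
        _ = 1 := h2
    have hPF : P (F j)
        = ∫⁻ ω, (F j).indicator (fun _ => (1 : ENNReal)) ω * g (η (Fin.last j) ω) ∂P := by
      have e1 : ∫⁻ ω, B.indicator (1 : (Fin j → ℝ) → ENNReal) (fun i : Fin j => η i.castSucc ω) ∂P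
          = P (F j) := by
        rw [lintegral_congr fun ω => hiFpt ω]
        exact lintegral_indicator_one (hFmeas j)
      calc P (F j) = P (F j) * 1 := (mul_one _).symm
        _ = (∫⁻ ω, B.indicator (1 : (Fin j → ℝ) → ENNReal) (fun i : Fin j => η i.castSucc ω) ∂P)
            * ∫⁻ ω, g (η (Fin.last j) ω) ∂P := by rw [e1, hstat1]
        _ = ∫⁻ ω, B.indicator (1 : (Fin j → ℝ) → ENNReal) (fun i : Fin j => η i.castSucc ω)
            * g (η (Fin.last j) ω) ∂P := hkey2.symm
        _ = _ := lintegral_congr fun ω => by rw [hiFpt ω]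
    have hpoint : ∀ ω, (F j).indicator (fun _ => (1 : ENNReal)) ω * g (η (Fin.last j) ω)
        ≤ ENNReal.ofReal (Real.exp (-(χ * x))) *
          (F j).indicator (fun ω' => g (ξ ((N : ℝ) * h) ω' - ξ 0 ω')) ω := by
      intro ω
      by_cases hω : ω ∈ F j
      · rw [Set.indicator_of_mem hω, Set.indicator_of_mem hω, one_mul, hlast]
        have hgt : ξ ((j : ℝ) * h) ω - ξ 0 ω > x := hω.1
        have hsplit : ξ ((N : ℝ) * h) ω - ξ ((j : ℝ) * h) ω
            = -(ξ ((j : ℝ) * h) ω - ξ 0 ω) + (ξ ((N : ℝ) * h) ω - ξ 0 ω) := by ring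
        simp only [hg_def, hsplit]
        rw [mul_add, Real.exp_add, ENNReal.ofReal_mul (Real.exp_nonneg _)]
        refine mul_le_mul_left (ENNReal.ofReal_le_ofReal (Real.exp_le_exp.2 ?_)) _
        nlinarith
      · rw [Set.indicator_of_notMem hω, Set.indicator_of_notMem hω, zero_mul, mul_zero]
    calc P (F j)
        = ∫⁻ ω, (F j).indicator (fun _ => (1 : ENNReal)) ω * g (η (Fin.last j) ω) ∂P := hPF
      _ ≤ ∫⁻ ω, ENNReal.ofReal (Real.exp (-(χ * x))) *
            (F j).indicator (fun ω' => g (ξ ((N : ℝ) * h) ω' - ξ 0 ω')) ω ∂P :=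
          lintegral_mono hpoint
      _ = ENNReal.ofReal (Real.exp (-(χ * x))) *
            ∫⁻ ω, (F j).indicator (fun ω' => g (ξ ((N : ℝ) * h) ω' - ξ 0 ω')) ω ∂P :=
          lintegral_const_mul _ ((hg.comp ((hξ.1 _).sub (hξ.1 _))).indicator (hFmeas j))
      _ = ENNReal.ofReal (Real.exp (-(χ * x))) *
            ∫⁻ ω in F j, g (ξ ((N : ℝ) * h) ω - ξ 0 ω) ∂P := by
          rw [lintegral_indicator (hFmeas j)]
  calc P {ω | ∃ j ≤ N, ξ ((j : ℝ) * h) ω - ξ 0 ω > x}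
      ≤ ∑ j ∈ Finset.range (N+1), P (F j) :=
        (measure_mono hcover).trans (measure_biUnion_finset_le _ _)
    _ ≤ ∑ j ∈ Finset.range (N+1), ENNReal.ofReal (Real.exp (-(χ * x))) *
          ∫⁻ ω in F j, g (ξ ((N : ℝ) * h) ω - ξ 0 ω) ∂P :=
        Finset.sum_le_sum fun j hj => hkey j (Nat.lt_succ_iff.1 (Finset.mem_range.1 hj))
    _ = ENNReal.ofReal (Real.exp (-(χ * x))) *
          ∑ j ∈ Finset.range (N+1), ∫⁻ ω in F j, g (ξ ((N : ℝ) * h) ω - ξ 0 ω) ∂P :=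
        (Finset.mul_sum _ _ _).symm
    _ ≤ ENNReal.ofReal (Real.exp (-(χ * x))) *
          ∫⁻ ω, g (ξ ((N : ℝ) * h) ω - ξ 0 ω) ∂P := by
        refine mul_le_mul_right ?_ _
        calc ∑ j ∈ Finset.range (N+1), ∫⁻ ω in F j, g (ξ ((N : ℝ) * h) ω - ξ 0 ω) ∂P
            ≤ ∑' j : ℕ, ∫⁻ ω in F j, g (ξ ((N : ℝ) * h) ω - ξ 0 ω) ∂P :=
              ENNReal.sum_le_tsum _
          _ = ∫⁻ ω in ⋃ j : ℕ, F j, g (ξ ((N : ℝ) * h) ω - ξ 0 ω) ∂P :=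
              (lintegral_iUnion hFmeas hFdisj _).symm
          _ ≤ ∫⁻ ω, g (ξ ((N : ℝ) * h) ω - ξ 0 ω) ∂P :=
              lintegral_mono' Measure.restrict_le_self le_rfl
    _ = ENNReal.ofReal (Real.exp (-(χ * x))) := by
        rw [grid_moment hξ hh N, hJ, one_pow, mul_one]

private lemma hJk (hξ : IsLevyProcess P ξ) (hχ : 0 < χ)
    (hcramer : ∫⁻ ω, ENNReal.ofReal (Real.exp (χ * ξ 1 ω)) ∂P = 1) (k : ℕ) :
    ∫⁻ ω, ENNReal.ofReal (Real.exp (χ * ξ ((1/2 : ℝ)^k) ω)) ∂P = 1 := by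
  have hh : (0:ℝ) ≤ (1/2 : ℝ)^k := by positivity
  have h2k : ((2^k : ℕ) : ℝ) * (1/2 : ℝ)^k = 1 := by
    push_cast
    rw [← mul_pow]
    norm_num
  have hgm := grid_moment (χ := χ) hξ hh (2^k)
  rw [h2k, lint_congr_zero hξ.2.2.1 (fun y => ENNReal.ofReal (Real.exp (χ * y))) 1,
    hcramer] at hgm
  set c := ∫⁻ ω, ENNReal.ofReal (Real.exp (χ * ξ ((1/2 : ℝ)^k) ω)) ∂P with hc
  rcases lt_trichotomy c 1 with hlt | heq | hgt
  · exfalso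
    have : c ^ (2^k : ℕ) < 1 := pow_lt_one₀ zero_le hlt (by positivity)
    rw [← hgm] at this
    exact lt_irrefl _ this
  · exact heq
  · exfalso
    have : (1:ENNReal) < c ^ (2^k : ℕ) := one_lt_pow₀ hgt (by positivity)
    rw [← hgm] at this
    exact lt_irrefl _ this

private lemma dyadic_maximal (hξ : IsLevyProcess P ξ) (hχ : 0 < χ)
    (hcramer : ∫⁻ ω, ENNReal.ofReal (Real.exp (χ * ξ 1 ω)) ∂P = 1) (x : ℝ) :
    P {ω | ∃ j k : ℕ, ξ ((j : ℝ) * (1/2 : ℝ)^k) ω - ξ 0 ω > x}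
      ≤ ENNReal.ofReal (Real.exp (-(χ * x))) := by
  set C : ℕ → Set Ω := fun k => {ω | ∃ j : ℕ, ξ ((j : ℝ) * (1/2 : ℝ)^k) ω - ξ 0 ω > x} with hC
  have hCk : ∀ k, P (C k) ≤ ENNReal.ofReal (Real.exp (-(χ * x))) := by
    intro k
    set Bk : ℕ → Set Ω := fun N => {ω | ∃ j ≤ N, ξ ((j : ℝ) * (1/2 : ℝ)^k) ω - ξ 0 ω > x}
      with hBk
    have hunion : C k = ⋃ N : ℕ, Bk N := by
      ext ω
      simp only [hC, hBk, Set.mem_setOf_eq, Set.mem_iUnion]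
      constructor
      · rintro ⟨j, hj⟩; exact ⟨j, j, le_rfl, hj⟩
      · rintro ⟨N, j, _, hj⟩; exact ⟨j, hj⟩
    have hmonoB : Monotone Bk := by
      intro a b hab ω
      rintro ⟨j, hja, hj⟩
      exact ⟨j, hja.trans hab, hj⟩
    rw [hunion, Directed.measure_iUnion (Monotone.directed_le hmonoB)]
    exact iSup_le fun N => grid_maximal hξ hχ (by positivity)
      (hJk hξ hχ hcramer k) N x
  have hunionC : {ω | ∃ j k : ℕ, ξ ((j : ℝ) * (1/2 : ℝ)^k) ω - ξ 0 ω > x} = ⋃ k : ℕ, C k := by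
    ext ω
    simp only [hC, Set.mem_setOf_eq, Set.mem_iUnion]
    exact ⟨fun ⟨j, k, hj⟩ => ⟨k, j, hj⟩, fun ⟨k, j, hj⟩ => ⟨j, k, hj⟩⟩
  have hmonoC : Monotone C := by
    intro a b hab
    induction b, hab using Nat.le_induction with
    | base => exact fun ω => id
    | succ b hab ih =>
      refine ih.trans fun ω => ?_
      rintro ⟨j, hj⟩
      refine ⟨2 * j, ?_⟩
      have : ((2 * j : ℕ) : ℝ) * (1/2 : ℝ)^(b+1) = (j : ℝ) * (1/2 : ℝ)^b := by
        push_cast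
        ring
      rwa [this]
  rw [hunionC, Directed.measure_iUnion (Monotone.directed_le hmonoC)]
  exact iSup_le hCk

private lemma ae_dyadic_bound (hξ : IsLevyProcess P ξ) (hχ : 0 < χ)
    (hcramer : ∫⁻ ω, ENNReal.ofReal (Real.exp (χ * ξ 1 ω)) ∂P = 1) :
    ∀ᵐ ω ∂P, ∃ m : ℕ, ∀ j k : ℕ, ξ ((j : ℝ) * (1/2 : ℝ)^k) ω - ξ 0 ω ≤ (m : ℝ) := by
  rw [ae_iff]
  refine measure_mono_null (fun ω hω => ?_)
    (?_ : P (⋂ m : ℕ, {ω | ∃ j k : ℕ, ξ ((j : ℝ) * (1/2 : ℝ)^k) ω - ξ 0 ω > (m : ℝ)}) = 0)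
  · simp only [Set.mem_setOf_eq, not_exists, not_forall, not_le] at hω
    simp only [Set.mem_iInter, Set.mem_setOf_eq]
    intro m
    obtain ⟨j, k, hjk⟩ := hω m
    exact ⟨j, k, hjk⟩
  · refine le_antisymm ?_ zero_le
    have hb : ∀ m : ℕ, P (⋂ m : ℕ, {ω | ∃ j k : ℕ, ξ ((j : ℝ) * (1/2 : ℝ)^k) ω - ξ 0 ω > (m : ℝ)})
        ≤ ENNReal.ofReal (Real.exp (-(χ * m))) := fun m =>
      (measure_mono (Set.iInter_subset _ m)).trans (dyadic_maximal hξ hχ hcramer m)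
    have hlim : Tendsto (fun m : ℕ => ENNReal.ofReal (Real.exp (-(χ * m)))) atTop (nhds 0) := by
      rw [← ENNReal.ofReal_zero]
      apply ENNReal.tendsto_ofReal
      have h1 : Tendsto (fun m : ℕ => χ * (m : ℝ)) atTop atTop :=
        (tendsto_natCast_atTop_atTop).const_mul_atTop hχ
      have h2 : Tendsto (fun m : ℕ => -(χ * (m : ℝ))) atTop atBot :=
        tendsto_neg_atTop_atBot.comp h1
      exact Real.tendsto_exp_atBot.comp h2
    exact ge_of_tendsto' hlim hb

private lemma dyadic_approx {t : ℝ} (ht : 0 ≤ t) :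
    ∃ q : ℕ → ℝ, (∀ n, ∃ j k : ℕ, q n = (j : ℝ) * (1/2 : ℝ)^k) ∧ (∀ n, t < q n) ∧
      Tendsto q atTop (nhds t) := by
  set q : ℕ → ℝ := fun n => ((⌊t * 2^n⌋₊ + 1 : ℕ) : ℝ) * (1/2 : ℝ)^n with hq
  have hpow : ∀ n : ℕ, (0:ℝ) < (1/2 : ℝ)^n := fun n => by positivity
  have hcancel : ∀ n : ℕ, (2:ℝ)^n * (1/2:ℝ)^n = 1 := fun n => by rw [← mul_pow]; norm_num
  have hlt : ∀ n, t < q n := by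
    intro n
    have h1 : t * 2^n < ((⌊t * 2^n⌋₊ + 1 : ℕ) : ℝ) := by
      push_cast
      exact Nat.lt_floor_add_one _
    calc t = t * ((2:ℝ)^n * (1/2:ℝ)^n) := by rw [hcancel]; ring
      _ = t * 2^n * (1/2:ℝ)^n := by ring
      _ < q n := mul_lt_mul_of_pos_right h1 (hpow n)
  have hub : ∀ n, q n ≤ t + (1/2:ℝ)^n := by
    intro n
    have h0 : ((⌊t * 2^n⌋₊ : ℕ) : ℝ) ≤ t * 2^n := Nat.floor_le (by positivity)
    calc q n ≤ (t * 2^n + 1) * (1/2:ℝ)^n := by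
          refine mul_le_mul_of_nonneg_right ?_ (hpow n).le
          push_cast
          linarith
      _ = t * ((2:ℝ)^n * (1/2:ℝ)^n) + (1/2:ℝ)^n := by ring
      _ = t + (1/2:ℝ)^n := by rw [hcancel]; ring
  refine ⟨q, fun n => ⟨_, n, rfl⟩, hlt, ?_⟩
  have htop : Tendsto (fun n : ℕ => t + (1/2:ℝ)^n) atTop (nhds t) := by
    have h2 := tendsto_pow_atTop_nhds_zero_of_lt_one
      (by norm_num : (0:ℝ) ≤ 1/2) (by norm_num : (1/2:ℝ) < 1)
    simpa using tendsto_const_nhds.add h2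
  exact tendsto_of_tendsto_of_tendsto_of_le_of_le tendsto_const_nhds htop
    (fun n => (hlt n).le) hub

end aux

/-- If `ξ` is a Lévy process with `E[exp (χ ξ 1)] = 1` for some `χ > 0` and
`ξ t → -∞` a.s., then `S_∞ = sup_{t ≥ 0} ξ t` is finite a.s. and
`E[exp (α S_∞)] < ∞` for every `0 ≤ α < χ`. -/
theorem exp_moments_of_supremum
    {Ω : Type*} [MeasurableSpace Ω] (P : Measure Ω) [IsProbabilityMeasure P]
    (ξ : ℝ → Ω → ℝ) (hξ : IsLevyProcess P ξ)
    (χ : ℝ) (hχ : 0 < χ)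
    (hcramer : ∫⁻ ω, ENNReal.ofReal (Real.exp (χ * ξ 1 ω)) ∂P = 1)
    (hdrift : ∀ᵐ ω ∂P, Tendsto (fun t => ξ t ω) atTop atBot) :
    (∀ᵐ ω ∂P, BddAbove (Set.range fun t : {t : ℝ // 0 ≤ t} => ξ t.1 ω)) ∧
    ∀ α : ℝ, 0 ≤ α → α < χ →
      ∫⁻ ω, ENNReal.ofReal
          (Real.exp (α * sSup (Set.range fun t : {t : ℝ // 0 ≤ t} => ξ t.1 ω))) ∂P < ⊤ := by

  have hgood : ∀ᵐ ω ∂P,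
      (∃ m : ℕ, ∀ j k : ℕ, ξ ((j : ℝ) * (1/2 : ℝ)^k) ω - ξ 0 ω ≤ (m : ℝ)) ∧ ξ 0 ω = 0 ∧
      (∀ t : ℝ, 0 ≤ t → ContinuousWithinAt (fun s => ξ s ω) (Set.Ici t) t ∧
        (0 < t → ∃ l : ℝ, Tendsto (fun s => ξ s ω) (nhdsWithin t (Set.Iio t)) (nhds l))) :=
    (ae_dyadic_bound hξ hχ hcramer).and (hξ.2.2.1.and hξ.2.2.2.2.2)
  have hmain : ∀ ω, (∃ m : ℕ, ∀ j k : ℕ, ξ ((j:ℝ) * (1/2:ℝ)^k) ω - ξ 0 ω ≤ (m:ℝ)) → ξ 0 ω = 0 →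
      (∀ t : ℝ, 0 ≤ t → ContinuousWithinAt (fun s => ξ s ω) (Set.Ici t) t ∧
        (0 < t → ∃ l : ℝ, Tendsto (fun s => ξ s ω) (nhdsWithin t (Set.Iio t)) (nhds l))) →
      BddAbove (Set.range fun t : {t : ℝ // 0 ≤ t} => ξ t.1 ω) ∧
      (∀ y : ℝ, y < sSup (Set.range fun t : {t : ℝ // 0 ≤ t} => ξ t.1 ω) →
        ∃ j k : ℕ, ξ ((j:ℝ) * (1/2:ℝ)^k) ω - ξ 0 ω > y) := by
    rintro ω ⟨m, hm⟩ h0 hc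
    have hle : ∀ t : ℝ, 0 ≤ t → ξ t ω ≤ m := by
      intro t ht
      obtain ⟨q, hqd, hqgt, hqlim⟩ := dyadic_approx ht
      have htend : Tendsto (fun n => ξ (q n) ω) atTop (nhds (ξ t ω)) :=
        ((hc t ht).1).tendsto.comp (tendsto_nhdsWithin_of_tendsto_nhds_of_eventually_within q
          hqlim (Filter.Eventually.of_forall fun n => (hqgt n).le))
      refine le_of_tendsto htend (Filter.Eventually.of_forall fun n => ?_)
      obtain ⟨j, k, hjk⟩ := hqd n
      rw [hjk]
      have h2 := hm j k
      rw [h0, sub_zero] at h2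
      exact h2
    have hbdd : BddAbove (Set.range fun t : {t : ℝ // 0 ≤ t} => ξ t.1 ω) := by
      refine ⟨(m : ℝ), ?_⟩
      rintro y ⟨t, rfl⟩
      exact hle t.1 t.2
    refine ⟨hbdd, fun y hy => ?_⟩
    have hne : (Set.range fun t : {t : ℝ // 0 ≤ t} => ξ t.1 ω).Nonempty :=
      ⟨ξ 0 ω, Set.mem_range_self (⟨0, le_rfl⟩ : {t : ℝ // 0 ≤ t})⟩
    obtain ⟨z, ⟨tt, rfl⟩, hz⟩ := exists_lt_of_lt_csSup hne hy
    obtain ⟨q, hqd, hqgt, hqlim⟩ := dyadic_approx tt.2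
    have htend : Tendsto (fun n => ξ (q n) ω) atTop (nhds (ξ tt.1 ω)) :=
      ((hc tt.1 tt.2).1).tendsto.comp (tendsto_nhdsWithin_of_tendsto_nhds_of_eventually_within q
        hqlim (Filter.Eventually.of_forall fun n => (hqgt n).le))
    obtain ⟨n, hn⟩ := (htend.eventually (eventually_gt_nhds hz)).exists
    obtain ⟨j, k, hjk⟩ := hqd n
    exact ⟨j, k, by rw [← hjk, h0, sub_zero]; exact hn⟩
  constructor
  · exact hgood.mono fun ω ⟨h1, h2, h3⟩ => (hmain ω h1 h2 h3).1
  · intro α hα0 hαχ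
    set Dn : ℕ → Set Ω := fun n => {ω | ∃ j k : ℕ, ξ ((j:ℝ) * (1/2:ℝ)^k) ω - ξ 0 ω > (n:ℝ)}
      with hDn
    have hDmeas : ∀ n, MeasurableSet (Dn n) := by
      intro n
      have he : Dn n = ⋃ j : ℕ, ⋃ k : ℕ, {ω | (n:ℝ) < ξ ((j:ℝ)*(1/2:ℝ)^k) ω - ξ 0 ω} := by
        ext ω; simp [hDn]
      rw [he]
      exact MeasurableSet.iUnion fun j => MeasurableSet.iUnion fun k =>
        measurableSet_lt measurable_const ((hξ.1 _).sub (hξ.1 _))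
    have hptwise : ∀ᵐ ω ∂P,
        ENNReal.ofReal (Real.exp (α * sSup (Set.range fun t : {t : ℝ // 0 ≤ t} => ξ t.1 ω)))
        ≤ ENNReal.ofReal (Real.exp α)
          + ∑' n : ℕ, ENNReal.ofReal (Real.exp (α * ((n:ℝ) + 2))) * (Dn n).indicator 1 ω := by
      refine hgood.mono fun ω ⟨h1, h2, h3⟩ => ?_
      obtain ⟨hbdd, hhit⟩ := hmain ω h1 h2 h3
      set S := sSup (Set.range fun t : {t : ℝ // 0 ≤ t} => ξ t.1 ω) with hS
      rcases lt_or_ge S 1 with hS1 | hS1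
      · refine le_trans ?_ le_self_add
        exact ENNReal.ofReal_le_ofReal (Real.exp_le_exp.2 (by nlinarith))
      · set n : ℕ := ⌊S⌋₊ - 1 with hn
        have hfl1 : 1 ≤ ⌊S⌋₊ := Nat.le_floor (by exact_mod_cast hS1)
        have hnn : n + 1 = ⌊S⌋₊ := Nat.succ_pred_eq_of_pos hfl1
        have hSlt : S < (n:ℝ) + 2 := by
          have hl := Nat.lt_floor_add_one S
          have : ((⌊S⌋₊ : ℕ) : ℝ) = (n : ℝ) + 1 := by exact_mod_cast hnn.symm
          linarith
        have hSgt : (n:ℝ) < S := by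
          have hfl := Nat.floor_le (le_trans zero_le_one hS1)
          have : ((⌊S⌋₊ : ℕ) : ℝ) = (n : ℝ) + 1 := by exact_mod_cast hnn.symm
          linarith
        have hmem : ω ∈ Dn n := hhit (n:ℝ) hSgt
        calc ENNReal.ofReal (Real.exp (α * S))
            ≤ ENNReal.ofReal (Real.exp (α * ((n:ℝ) + 2))) := by
              refine ENNReal.ofReal_le_ofReal (Real.exp_le_exp.2 ?_)
              exact mul_le_mul_of_nonneg_left hSlt.le hα0
          _ = ENNReal.ofReal (Real.exp (α * ((n:ℝ) + 2))) * (Dn n).indicator 1 ω := by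
              rw [Set.indicator_of_mem hmem]
              simp
          _ ≤ ∑' n' : ℕ, ENNReal.ofReal (Real.exp (α * ((n':ℝ) + 2))) * (Dn n').indicator 1 ω :=
              ENNReal.le_tsum n
          _ ≤ _ := le_add_self
    calc ∫⁻ ω, ENNReal.ofReal
          (Real.exp (α * sSup (Set.range fun t : {t : ℝ // 0 ≤ t} => ξ t.1 ω))) ∂P
        ≤ ∫⁻ ω, (ENNReal.ofReal (Real.exp α)
          + ∑' n : ℕ, ENNReal.ofReal (Real.exp (α * ((n:ℝ) + 2))) * (Dn n).indicator 1 ω) ∂P :=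
          lintegral_mono_ae hptwise
      _ = ENNReal.ofReal (Real.exp α)
          + ∑' n : ℕ, ENNReal.ofReal (Real.exp (α * ((n:ℝ) + 2))) * P (Dn n) := by
          rw [lintegral_add_left measurable_const, lintegral_const, measure_univ, mul_one]
          congr 1
          rw [lintegral_tsum fun n =>
            ((measurable_one.indicator (hDmeas n)).const_mul _).aemeasurable]
          refine tsum_congr fun n => ?_
          rw [lintegral_const_mul _ (measurable_one.indicator (hDmeas n)),
            lintegral_indicator_one (hDmeas n)]
      _ ≤ ENNReal.ofReal (Real.exp α)
          + ∑' n : ℕ, ENNReal.ofReal (Real.exp (α * ((n:ℝ) + 2)))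
            * ENNReal.ofReal (Real.exp (-(χ * n))) :=
          add_le_add_right (ENNReal.tsum_le_tsum fun n : ℕ =>
            mul_le_mul_right (dyadic_maximal hξ hχ hcramer ((n:ℕ):ℝ)) _) _
      _ = ENNReal.ofReal (Real.exp α)
          + ENNReal.ofReal (Real.exp (2*α)) * ∑' n : ℕ, (ENNReal.ofReal (Real.exp (α - χ)))^n := by
          rw [← ENNReal.tsum_mul_left]
          congr 1
          refine tsum_congr fun n => ?_
          rw [← ENNReal.ofReal_pow (Real.exp_nonneg _), ← Real.exp_nat_mul,
            ← ENNReal.ofReal_mul (Real.exp_nonneg _), ← Real.exp_add,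
            ← ENNReal.ofReal_mul (Real.exp_nonneg _), ← Real.exp_add]
          congr 2
          ring
      _ < ⊤ := by
          have hr : ENNReal.ofReal (Real.exp (α - χ)) < 1 := by
            rw [ENNReal.ofReal_lt_one]
            exact Real.exp_lt_one_iff.2 (sub_neg.2 hαχ)
          rw [ENNReal.tsum_geometric]
          refine ENNReal.add_lt_top.2 ⟨ENNReal.ofReal_lt_top, ?_⟩
          refine ENNReal.mul_lt_top ENNReal.ofReal_lt_top ?_
          rw [ENNReal.inv_lt_top]
          exact tsub_pos_of_lt hr
end

section
/- Let X be a real random variable, let k > 0 and C ≥ 0. If (1/t) ∫_0^t u^k P(X > u) du → C as t → +∞, then t^k P(X > t) → C as t → +∞. -/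
open MeasureTheory Filter Set Topology

private noncomputable def goldieF (g : ℝ → ℝ) (k t : ℝ) : ℝ :=
  ∫ u in Set.Ioc (0 : ℝ) t, u ^ k * g u

private lemma goldie_integrableOn {g : ℝ → ℝ} (hg : Antitone g) (h0 : ∀ u, 0 ≤ g u)
    (h1 : ∀ u, g u ≤ 1) {k : ℝ} (hk : 0 < k) {t s : ℝ} (ht : 0 ≤ t) :
    IntegrableOn (fun u => u ^ k * g u) (Ioc t s) := by
  rcases le_or_gt s t with hst | hst
  · simp [Set.Ioc_eq_empty (not_lt.2 hst)]
  · apply Measure.integrableOn_of_bounded (M := s ^ k)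
    · simp
    · exact (((Real.continuous_rpow_const hk.le).measurable).mul hg.measurable).aestronglyMeasurable
    · filter_upwards [ae_restrict_mem measurableSet_Ioc] with u hu
      have hu0 : 0 ≤ u := le_trans ht hu.1.le
      rw [Real.norm_eq_abs, abs_of_nonneg (mul_nonneg (Real.rpow_nonneg hu0 k) (h0 u))]
      calc u ^ k * g u ≤ s ^ k * 1 :=
            mul_le_mul (Real.rpow_le_rpow hu0 hu.2 hk.le) (h1 u) (h0 u)
              (Real.rpow_nonneg (hu0.trans hu.2) k)
        _ = s ^ k := mul_one _

private lemma goldie_integral_rpow {k : ℝ} (hk : 0 < k) {t s : ℝ} (hts : t ≤ s) :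
    ∫ u in Ioc t s, u ^ k = (s ^ (k + 1) - t ^ (k + 1)) / (k + 1) := by
  rw [← intervalIntegral.integral_of_le hts, integral_rpow (Or.inl (by linarith))]

private lemma goldie_rpow_integrableOn {k : ℝ} (hk : 0 < k) {t s : ℝ} :
    IntegrableOn (fun u : ℝ => u ^ k) (Ioc t s) :=
  (intervalIntegral.intervalIntegrable_rpow (Or.inl hk.le)).1

private lemma goldie_sandwich {g : ℝ → ℝ} (hg : Antitone g) (h0 : ∀ u, 0 ≤ g u)
    (h1 : ∀ u, g u ≤ 1) {k : ℝ} (hk : 0 < k) {t s : ℝ} (ht : 0 < t) (hts : t ≤ s) :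
    g s * ((s ^ (k + 1) - t ^ (k + 1)) / (k + 1)) ≤ (∫ u in Ioc t s, u ^ k * g u) ∧
      (∫ u in Ioc t s, u ^ k * g u) ≤ g t * ((s ^ (k + 1) - t ^ (k + 1)) / (k + 1)) := by
  have hr := goldie_rpow_integrableOn (t := t) (s := s) hk
  have hf := goldie_integrableOn hg h0 h1 hk (t := t) (s := s) ht.le
  have hnn : ∀ u ∈ Ioc t s, (0 : ℝ) ≤ u ^ k := fun u hu =>
    Real.rpow_nonneg (ht.trans hu.1).le k
  constructor
  · calc g s * ((s ^ (k + 1) - t ^ (k + 1)) / (k + 1)) = ∫ u in Ioc t s, u ^ k * g s := by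
          rw [MeasureTheory.integral_mul_const, goldie_integral_rpow hk hts, mul_comm]
      _ ≤ ∫ u in Ioc t s, u ^ k * g u := by
          apply setIntegral_mono_on (hr.mul_const _) hf measurableSet_Ioc
          intro u hu
          exact mul_le_mul_of_nonneg_left (hg hu.2) (hnn u hu)
  · calc (∫ u in Ioc t s, u ^ k * g u) ≤ ∫ u in Ioc t s, u ^ k * g t := by
          apply setIntegral_mono_on hf (hr.mul_const _) measurableSet_Ioc
          intro u hu
          exact mul_le_mul_of_nonneg_left (hg hu.1.le) (hnn u hu)
      _ = g t * ((s ^ (k + 1) - t ^ (k + 1)) / (k + 1)) := by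
          rw [MeasureTheory.integral_mul_const, goldie_integral_rpow hk hts, mul_comm]

private lemma goldieF_sub {g : ℝ → ℝ} (hg : Antitone g) (h0 : ∀ u, 0 ≤ g u)
    (h1 : ∀ u, g u ≤ 1) {k : ℝ} (hk : 0 < k) {t s : ℝ} (ht : 0 ≤ t) (hts : t ≤ s) :
    goldieF g k s - goldieF g k t = ∫ u in Ioc t s, u ^ k * g u := by
  unfold goldieF
  rw [← Set.Ioc_union_Ioc_eq_Ioc ht hts,
    setIntegral_union (show Disjoint (Ioc (0:ℝ) t) (Ioc t s) from Set.Ioc_disjoint_Ioc.2 ((min_le_left _ _).trans (le_max_right _ _))) measurableSet_Ioc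
      (goldie_integrableOn hg h0 h1 hk le_rfl) (goldie_integrableOn hg h0 h1 hk ht)]
  ring

/-- Goldie's Tauberian lemma (lemma 9.3 of Goldie): if
`(1/t) ∫_0^t u ^ k * P (X > u) du → C` as `t → ∞`, then `t ^ k * P (X > t) → C`. -/
theorem tail_of_cesaro_limit
    {Ω : Type*} [MeasurableSpace Ω] (P : Measure Ω) [IsProbabilityMeasure P]
    (X : Ω → ℝ) (k : ℝ) (hk : 0 < k) (C : ℝ) (hC : 0 ≤ C)
    (h : Tendsto (fun t : ℝ =>
        (∫ u in Set.Ioc (0 : ℝ) t, u ^ k * (P {ω | u < X ω}).toReal) / t) atTop (nhds C)) :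
    Tendsto (fun t : ℝ => t ^ k * (P {ω | t < X ω}).toReal) atTop (nhds C) := by
  set g : ℝ → ℝ := fun u => (P {ω | u < X ω}).toReal with hgdef
  have hg : Antitone g := fun u v huv =>
    ENNReal.toReal_mono (measure_ne_top _ _) (measure_mono fun ω hω => lt_of_le_of_lt huv hω)
  have h0 : ∀ u, 0 ≤ g u := fun u => ENNReal.toReal_nonneg
  have h1 : ∀ u, g u ≤ 1 := fun u => by
    simpa using ENNReal.toReal_mono ENNReal.one_ne_top (prob_le_one (μ := P) (s := {ω | u < X ω}))
  have hF : Tendsto (fun t => goldieF g k t / t) atTop (𝓝 C) := h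
  have hk1 : (0 : ℝ) < k + 1 := by linarith
  -- scaled limits
  have hscale : ∀ c : ℝ, 0 < c → Tendsto (fun t => goldieF g k (c * t) / t) atTop (𝓝 (c * C)) := by
    intro c hc
    have h2 : Tendsto (fun t => goldieF g k (c * t) / (c * t)) atTop (𝓝 C) :=
      hF.comp (tendsto_id.const_mul_atTop hc)
    refine (h2.const_mul c).congr' ?_
    filter_upwards [eventually_gt_atTop 0] with t ht
    field_simp
  -- slope limit
  have hslope : Tendsto (fun x : ℝ => (x ^ (k + 1) - 1) / (x - 1)) (𝓝[≠] (1 : ℝ)) (𝓝 (k + 1)) := by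
    have hd : HasDerivAt (fun x : ℝ => x ^ (k + 1)) (k + 1) 1 := by
      have := Real.hasDerivAt_rpow_const (x := 1) (p := k + 1) (Or.inl one_ne_zero)
      simpa using this
    have h2 := hasDerivAt_iff_tendsto_slope.mp hd
    refine h2.congr fun x => ?_
    simp [slope_def_field, Real.one_rpow]
  have hAgen : Tendsto (fun x : ℝ => (k + 1) * ((x - 1) * C) / (x ^ (k + 1) - 1)) (𝓝[≠] (1 : ℝ))
      (𝓝 C) := by
    have h2 : Tendsto (fun x : ℝ => ((k + 1) * C) / ((x ^ (k + 1) - 1) / (x - 1))) (𝓝[≠] (1 : ℝ))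
        (𝓝 (((k + 1) * C) / (k + 1))) := tendsto_const_nhds.div hslope hk1.ne'
    have h3 : ((k + 1) * C) / (k + 1) = C := by field_simp
    rw [h3] at h2
    exact h2.congr fun x => by rw [div_div_eq_mul_div]; ring
  have hone : ∀ x : ℝ, 1 < x → 1 < x ^ (k + 1) := fun x hx =>
    (Real.one_lt_rpow_iff_of_pos (by linarith)).mpr (Or.inl ⟨hx, by linarith⟩)
  rw [tendsto_order]
  constructor
  · -- liminf side
    intro a ha
    have hA1 : Tendsto (fun x : ℝ => (k + 1) * ((x - 1) * C) / (x ^ (k + 1) - 1)) (𝓝[>] (1 : ℝ))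
        (𝓝 C) := hAgen.mono_left (nhdsWithin_mono 1 fun x hx => ne_of_gt hx)
    obtain ⟨l, hal, hl1⟩ :=
      ((hA1.eventually_const_lt ha).and eventually_mem_nhdsWithin).exists
    have hl1 : (1 : ℝ) < l := hl1
    have hl0 : (0 : ℝ) < l := by linarith
    have hc : 0 < l ^ (k + 1) - 1 := by have := hone l hl1; linarith
    have h4 : Tendsto (fun t => (goldieF g k (l * t) - goldieF g k t) / t) atTop
        (𝓝 ((l - 1) * C)) := by
      have h5 := (hscale l hl0).sub hF
      rw [show l * C - C = (l - 1) * C from by ring] at h5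
      exact h5.congr fun t => (sub_div _ _ _).symm
    have hD := (h4.const_mul (k + 1)).div_const (l ^ (k + 1) - 1)
    filter_upwards [eventually_gt_atTop 0, hD.eventually_const_lt hal] with t ht hRt
    refine lt_of_lt_of_le hRt ?_
    show (k + 1) * ((goldieF g k (l * t) - goldieF g k t) / t) / (l ^ (k + 1) - 1) ≤ t ^ k * g t
    have hts : t ≤ l * t := by nlinarith
    have hkey := (goldie_sandwich hg h0 h1 hk ht hts).2
    rw [← goldieF_sub hg h0 h1 hk ht.le hts] at hkey
    rw [Real.mul_rpow hl0.le ht.le, show t ^ (k + 1) = t ^ k * t from by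
      rw [Real.rpow_add ht, Real.rpow_one]] at hkey
    set D := goldieF g k (l * t) - goldieF g k t with hDdef
    rw [div_le_iff₀ hc, ← mul_div_assoc, div_le_iff₀ ht]
    have hkey2 : (k + 1) * D ≤ g t * (l ^ (k + 1) * (t ^ k * t) - t ^ k * t) := by
      have h6 := mul_le_mul_of_nonneg_left hkey hk1.le
      calc (k + 1) * D
          ≤ (k + 1) * (g t * ((l ^ (k + 1) * (t ^ k * t) - t ^ k * t) / (k + 1))) := h6
        _ = g t * (l ^ (k + 1) * (t ^ k * t) - t ^ k * t) := by field_simp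
    calc (k + 1) * D ≤ g t * (l ^ (k + 1) * (t ^ k * t) - t ^ k * t) := hkey2
      _ = t ^ k * g t * (l ^ (k + 1) - 1) * t := by ring
  · -- limsup side
    intro b hb
    have hA2 : Tendsto (fun x : ℝ => (k + 1) * ((x - 1) * C) / (x ^ (k + 1) - 1)) (𝓝[<] (1 : ℝ))
        (𝓝 C) := hAgen.mono_left (nhdsWithin_mono 1 fun x hx => ne_of_lt hx)
    have hIoo : Ioo (0 : ℝ) 1 ∈ 𝓝[<] (1 : ℝ) :=
      Ioo_mem_nhdsLT_of_mem ⟨zero_lt_one, le_rfl⟩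
    obtain ⟨m, hbm, hm⟩ :=
      ((hA2.eventually_lt_const hb).and (eventually_of_mem hIoo fun x hx => hx)).exists
    have hm0 : (0 : ℝ) < m := hm.1
    have hm1 : m < 1 := hm.2
    have hcneg : m ^ (k + 1) - 1 < 0 := by
      have := Real.rpow_lt_one hm0.le hm1 hk1
      linarith
    have hcd : (0 : ℝ) < 1 - m ^ (k + 1) := by linarith
    have heq : (k + 1) * ((m - 1) * C) / (m ^ (k + 1) - 1)
        = (k + 1) * ((1 - m) * C) / (1 - m ^ (k + 1)) :=
      (div_eq_div_iff hcneg.ne hcd.ne').mpr (by ring)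
    rw [heq] at hbm
    have h4 : Tendsto (fun s => (goldieF g k s - goldieF g k (m * s)) / s) atTop
        (𝓝 ((1 - m) * C)) := by
      have h5 := hF.sub (hscale m hm0)
      rw [show C - m * C = (1 - m) * C from by ring] at h5
      exact h5.congr fun s => (sub_div _ _ _).symm
    have hS := (h4.const_mul (k + 1)).div_const (1 - m ^ (k + 1))
    filter_upwards [eventually_gt_atTop 0, hS.eventually_lt_const hbm] with s hs hSs
    refine lt_of_le_of_lt ?_ hSs
    show s ^ k * g s ≤ (k + 1) * ((goldieF g k s - goldieF g k (m * s)) / s) / (1 - m ^ (k + 1))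
    have hms : 0 < m * s := mul_pos hm0 hs
    have hts : m * s ≤ s := by nlinarith
    have hkey := (goldie_sandwich hg h0 h1 hk hms hts).1
    rw [← goldieF_sub hg h0 h1 hk hms.le hts] at hkey
    rw [Real.mul_rpow hm0.le hs.le, show s ^ (k + 1) = s ^ k * s from by
      rw [Real.rpow_add hs, Real.rpow_one]] at hkey
    set D := goldieF g k s - goldieF g k (m * s) with hDdef
    rw [le_div_iff₀ hcd, ← mul_div_assoc, le_div_iff₀ hs]
    have hkey2 : g s * (s ^ k * s - m ^ (k + 1) * (s ^ k * s)) ≤ (k + 1) * D := by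
      have h6 := mul_le_mul_of_nonneg_left hkey hk1.le
      calc g s * (s ^ k * s - m ^ (k + 1) * (s ^ k * s))
          = (k + 1) * (g s * ((s ^ k * s - m ^ (k + 1) * (s ^ k * s)) / (k + 1))) := by
            field_simp
        _ ≤ (k + 1) * D := h6
    calc s ^ k * g s * (1 - m ^ (k + 1)) * s
        = g s * (s ^ k * s - m ^ (k + 1) * (s ^ k * s)) := by ring
      _ ≤ (k + 1) * D := hkey2
end

section
/- Let ξ = (ξ_t)_{t≥0} be a real Lévy process satisfying E[e^{χ ξ_1}] = 1 for some χ > 0 and E[ξ_1] ∈ [−∞, 0), so that A_∞ = ∫_0^∞ e^{ξ_s} ds is finite a.s. Let (T_i)_{i≥1} be i.i.d. standard exponential random variables independent of ξ, set Θ_n = T_1 + … + T_n, S_0 = 0 and S_n = ξ_{Θ_n}. Let (M, A) be a pair of random variables, independent of (ξ, (T_i)_{i≥1}), with M and A independent of each other, M distributed as e^{S_1} and A distributed as A_∞. Define r(t) = e^{χ t} P(A_∞ > e^t), g(t) = e^{χ t} ( P(A > e^t) − P(M·A > e^t) ), and δ_n(t) = e^{χ t} P( e^{S_n} A > e^t ).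 Then for every n ≥ 1 and every t ∈ ℝ: r(t) = Σ_{k=0}^{n−1} E[ e^{χ S_k} g(t − S_k) ] + δ_n(t). -/
open MeasureTheory ProbabilityTheory Filter Set

namespace RD

variable {Ω : Type*} [MeasurableSpace Ω]


variable {Ω : Type*} [MeasurableSpace Ω]

lemma integrable_of_bound (P : Measure Ω) [IsFiniteMeasure P] {f : Ω → ℝ}
    (hf : AEStronglyMeasurable f P) (C : ℝ) (hC : ∀ ω, |f ω| ≤ C) : Integrable f P :=
  Integrable.mono' (integrable_const C) hf
    (Filter.Eventually.of_forall (by simpa [Real.norm_eq_abs] using hC))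

lemma abs_integral_le (P : Measure Ω) [IsProbabilityMeasure P] (f : Ω → ℝ) (C : ℝ)
    (h : ∀ ω, |f ω| ≤ C) : |∫ ω, f ω ∂P| ≤ C := by
  have := norm_integral_le_of_norm_le_const (μ := P) (f := f) (C := C)
    (Filter.Eventually.of_forall (by simpa [Real.norm_eq_abs] using h))
  simpa [Real.norm_eq_abs, measure_univ] using this

lemma toReal_prob_le_one (P : Measure Ω) [IsProbabilityMeasure P] (s : Set Ω) :
    (P s).toReal ≤ 1 := by
  have : (P s).toReal ≤ (P univ).toReal :=
    ENNReal.toReal_mono (measure_ne_top _ _) (measure_mono (subset_univ s))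
  simpa [measure_univ] using this

lemma indep_fubini {α γ : Type*} [MeasurableSpace α] [MeasurableSpace γ]
    (P : Measure Ω) [IsProbabilityMeasure P] {X : Ω → α} {Y : Ω → γ}
    (hX : Measurable X) (hY : Measurable Y) (hind : IndepFun X Y P)
    (k : α → γ → ℝ) (hk : Measurable (Function.uncurry k)) (C : ℝ)
    (hC : ∀ x y, |k x y| ≤ C) :
    ∫ ω, k (X ω) (Y ω) ∂P = ∫ ω, ∫ ω', k (X ω) (Y ω') ∂P ∂P := by
  haveI : IsProbabilityMeasure (P.map X) := Measure.isProbabilityMeasure_map hX.aemeasurable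
  haveI : IsProbabilityMeasure (P.map Y) := Measure.isProbabilityMeasure_map hY.aemeasurable
  have hmap : P.map (fun ω => (X ω, Y ω)) = (P.map X).prod (P.map Y) :=
    (indepFun_iff_map_prod_eq_prod_map_map hX.aemeasurable hY.aemeasurable).mp hind
  have h1 : ∫ ω, k (X ω) (Y ω) ∂P
      = ∫ p, Function.uncurry k p ∂(P.map (fun ω => (X ω, Y ω))) := by
    rw [integral_map (hX.prodMk hY).aemeasurable hk.aestronglyMeasurable]
    rfl
  have hint : Integrable (Function.uncurry k) ((P.map X).prod (P.map Y)) :=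
    integrable_of_bound _ hk.aestronglyMeasurable C (fun p => hC p.1 p.2)
  rw [h1, hmap, integral_prod _ hint]
  have h2 : ∀ x, ∫ y, Function.uncurry k (x, y) ∂(P.map Y) = ∫ ω', k x (Y ω') ∂P := fun x =>
    integral_map hY.aemeasurable ((hk.comp measurable_prodMk_left).aestronglyMeasurable)
  simp_rw [h2]
  have hg : StronglyMeasurable (fun x => ∫ ω', k x (Y ω') ∂P) := by
    have : Measurable (fun p : α × Ω => k p.1 (Y p.2)) :=
      hk.comp (measurable_fst.prodMk (hY.comp measurable_snd))
    exact this.stronglyMeasurable.integral_prod_right'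
  rw [integral_map hX.aemeasurable hg.aestronglyMeasurable]

noncomputable def dyad (m : ℕ) (x : ℝ) : ℝ := (⌈x * 2 ^ m⌉ : ℤ) / 2 ^ m

lemma le_dyad (m : ℕ) (x : ℝ) : x ≤ dyad m x := by
  rw [dyad, le_div_iff₀ (by positivity : (0:ℝ) < 2 ^ m)]
  exact Int.le_ceil _

lemma dyad_le (m : ℕ) (x : ℝ) : dyad m x ≤ x + (1/2) ^ m := by
  rw [dyad, div_le_iff₀ (by positivity : (0:ℝ) < 2 ^ m)]
  have h := (Int.ceil_lt_add_one (x * 2 ^ m)).le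
  calc (⌈x * 2 ^ m⌉ : ℝ) ≤ x * 2 ^ m + 1 := h
    _ = (x + (1/2) ^ m) * 2 ^ m := by
        have : ((1:ℝ)/2) ^ m * 2 ^ m = 1 := by
          rw [div_pow, one_pow, div_mul_cancel₀]
          positivity
        ring_nf
        nlinarith [this]

lemma tendsto_dyad (x : ℝ) : Tendsto (fun m => dyad m x) atTop (nhds x) := by
  have h1 : Tendsto (fun m : ℕ => x + (1/2:ℝ) ^ m) atTop (nhds x) := by
    simpa using tendsto_const_nhds.add
      (tendsto_pow_atTop_nhds_zero_of_lt_one (by norm_num) (by norm_num : (1/2:ℝ) < 1))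
  exact tendsto_of_tendsto_of_tendsto_of_le_of_le tendsto_const_nhds h1
    (fun m => le_dyad m x) (fun m => dyad_le m x)

noncomputable def Xi : ℝ × (ℝ → ℝ) → ℝ :=
  fun p => limsup (fun m : ℕ => p.2 (dyad m p.1)) atTop

lemma measurable_Xi : Measurable Xi := by
  apply Measurable.limsup
  intro m
  have h1 : Measurable fun q : (ℝ → ℝ) × ℤ => q.1 ((q.2 : ℝ) / 2 ^ m) :=
    measurable_from_prod_countable_left fun k => by simpa using measurable_pi_apply ((k:ℝ)/2^m)
  have h2 : Measurable fun p : ℝ × (ℝ → ℝ) => (p.2, (⌈p.1 * 2 ^ m⌉ : ℤ)) :=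
    measurable_snd.prodMk (Int.measurable_ceil.comp (measurable_fst.mul_const _))
  exact h1.comp h2

lemma Xi_eq {f : ℝ → ℝ} {θ : ℝ} (hf : ContinuousWithinAt f (Ici θ) θ) :
    Xi (θ, f) = f θ := by
  have h : Tendsto (fun m => f (dyad m θ)) atTop (nhds (f θ)) :=
    hf.tendsto.comp (tendsto_nhdsWithin_of_tendsto_nhds_of_eventually_within _
      (tendsto_dyad θ) (Filter.Eventually.of_forall fun m => le_dyad m θ))
  exact h.limsup_eq


variable {Ω : Type*} [MeasurableSpace Ω]

lemma freeze (P : Measure Ω) [IsProbabilityMeasure P]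
    (ξ : ℝ → Ω → ℝ) (hunc : Measurable (Function.uncurry ξ))
    (hcad : ∀ᵐ ω ∂P, ∀ t, 0 ≤ t → ContinuousWithinAt (fun s => ξ s ω) (Ici t) t)
    (W : Ω → ℝ) (hW : Measurable W) (hW0 : ∀ᵐ ω ∂P, 0 ≤ W ω)
    (hind : IndepFun W (fun ω => fun t : ℝ => ξ t ω) P)
    (F : ℝ → ℝ) (hF : Measurable F) (C : ℝ) (hC : ∀ x, |F x| ≤ C) :
    ∫ ω, F (ξ (W ω) ω) ∂P = ∫ ω, ∫ ω', F (ξ (W ω) ω') ∂P ∂P := by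
  have hpathm : Measurable (fun ω => fun t : ℝ => ξ t ω) :=
    measurable_pi_lambda _ fun t => hunc.of_uncurry_left
  set k : ℝ → (ℝ → ℝ) → ℝ := fun θ f => F (Xi (θ, f)) with hkdef
  have hk : Measurable (Function.uncurry k) := by
    have : Function.uncurry k = F ∘ Xi := rfl
    rw [this]; exact hF.comp measurable_Xi
  have step := indep_fubini P hW hpathm hind k hk C (fun x y => hC _)
  have hae : ∀ᵐ ω ∂P, k (W ω) (fun t => ξ t ω) = F (ξ (W ω) ω) := by
    filter_upwards [hcad, hW0] with ω h1 h2
    simp only [hkdef]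
    rw [Xi_eq (h1 (W ω) h2)]
  calc ∫ ω, F (ξ (W ω) ω) ∂P
      = ∫ ω, k (W ω) (fun t => ξ t ω) ∂P := (integral_congr_ae hae).symm
    _ = ∫ ω, ∫ ω', k (W ω) (fun t => ξ t ω') ∂P ∂P := step
    _ = ∫ ω, ∫ ω', F (ξ (W ω) ω') ∂P ∂P := by
        apply integral_congr_ae
        filter_upwards [hW0] with ω h2
        apply integral_congr_ae
        filter_upwards [hcad] with ω' h1
        simp only [hkdef]
        rw [Xi_eq (h1 (W ω) h2)]

lemma incr_split (P : Measure Ω) [IsProbabilityMeasure P]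
    (ξ : ℝ → Ω → ℝ) (hunc : Measurable (Function.uncurry ξ))
    (h0 : ∀ᵐ ω ∂P, ξ 0 ω = 0)
    (hinc : ∀ (n : ℕ) (t : ℕ → ℝ), Monotone t → t 0 = 0 →
      iIndepFun
        (fun i : Fin n => fun ω => ξ (t (i.1 + 1)) ω - ξ (t i.1) ω) P)
    (hstat : ∀ s t : ℝ, 0 ≤ s → 0 ≤ t →
      Measure.map (fun ω => ξ (t + s) ω - ξ t ω) P = Measure.map (ξ s) P)
    (s u : ℝ) (hs : 0 ≤ s) (hu : 0 ≤ u)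
    (F : ℝ → ℝ) (hF : Measurable F) (C : ℝ) (hC : ∀ x, |F x| ≤ C) :
    ∫ ω, F (ξ (s + u) ω) ∂P = ∫ ω', ∫ ω'', F (ξ s ω'' + ξ u ω') ∂P ∂P := by
  have hmeas : ∀ r, Measurable (ξ r) := fun r => hunc.of_uncurry_left
  set tf : ℕ → ℝ := fun i => if i = 0 then 0 else if i = 1 then s else s + u with htf
  have hmono : Monotone tf := by
    apply monotone_nat_of_le_succ
    intro m
    rcases m with _ | _ | m <;> simp [htf] <;> linarith
  have hI := hinc 2 tf hmono (by simp [htf])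
  have hIF : IndepFun (fun ω => ξ s ω - ξ 0 ω) (fun ω => ξ (s + u) ω - ξ s ω) P := by
    have h := hI.indepFun (show (0 : Fin 2) ≠ 1 by decide)
    simpa [htf] using h
  have hIF2 : IndepFun (ξ s) (fun ω => ξ (s + u) ω - ξ s ω) P := by
    refine hIF.congr ?_ EventuallyEq.rfl
    filter_upwards [h0] with ω h; rw [h, sub_zero]
  have hincm : Measurable (fun ω => ξ (s + u) ω - ξ s ω) := (hmeas _).sub (hmeas _)
  have step := indep_fubini P (hmeas s) hincm hIF2 (fun x y => F (x + y))
    (hF.comp measurable_add) C (fun x y => hC _)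
  have h1 : ∫ ω, F (ξ (s + u) ω) ∂P = ∫ ω, F (ξ s ω + (ξ (s + u) ω - ξ s ω)) ∂P := by
    congr 1; funext ω; rw [add_sub_cancel]
  rw [h1, step]
  have hmapI := hstat u s hu hs
  have hinner : ∀ x : ℝ, ∫ ω', F (x + (ξ (s + u) ω' - ξ s ω')) ∂P
      = ∫ ω', F (x + ξ u ω') ∂P := by
    intro x
    have hg : Measurable fun y : ℝ => F (x + y) := hF.comp (measurable_const.add measurable_id)
    calc ∫ ω', F (x + (ξ (s + u) ω' - ξ s ω')) ∂P
        = ∫ y, F (x + y) ∂(P.map (fun ω => ξ (s + u) ω - ξ s ω)) :=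
          (integral_map hincm.aemeasurable hg.aestronglyMeasurable).symm
      _ = ∫ y, F (x + y) ∂(P.map (ξ u)) := by rw [hmapI]
      _ = ∫ ω', F (x + ξ u ω') ∂P := integral_map (hmeas u).aemeasurable hg.aestronglyMeasurable
  simp_rw [hinner]
  have hint : Integrable (Function.uncurry fun ω ω' => F (ξ s ω + ξ u ω')) (P.prod P) := by
    apply integrable_of_bound
    · exact (hF.comp (((hmeas s).comp measurable_fst).add
        ((hmeas u).comp measurable_snd))).aestronglyMeasurable
    · exact fun p => hC _
  exact integral_integral_swap hint


variable {Ω : Type*} [MeasurableSpace Ω]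

lemma stepC (P : Measure Ω) [IsProbabilityMeasure P]
    (ξ : ℝ → Ω → ℝ) (hunc : Measurable (Function.uncurry ξ))
    (hcad : ∀ᵐ ω ∂P, ∀ t, 0 ≤ t → ContinuousWithinAt (fun s => ξ s ω) (Ici t) t)
    (h0 : ∀ᵐ ω ∂P, ξ 0 ω = 0)
    (hinc : ∀ (n : ℕ) (t : ℕ → ℝ), Monotone t → t 0 = 0 →
      iIndepFun
        (fun i : Fin n => fun ω => ξ (t (i.1 + 1)) ω - ξ (t i.1) ω) P)
    (hstat : ∀ s t : ℝ, 0 ≤ s → 0 ≤ t →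
      Measure.map (fun ω => ξ (t + s) ω - ξ t ω) P = Measure.map (ξ s) P)
    (T : ℕ → Ω → ℝ) (hTmeas : ∀ i, Measurable (T i))
    (hTiid : iIndepFun T P)
    (hT0 : ∀ i, ∀ᵐ ω ∂P, 0 ≤ T i ω)
    (hTlaw : ∀ i, Measure.map (T i) P = Measure.map (T 0) P)
    (hTindep : IndepFun (fun ω => fun i => T i ω) (fun ω => fun t : ℝ => ξ t ω) P)
    (L : Ω → ℝ) (hL : Measurable L)
    (hLlaw : Measure.map L P = Measure.map (fun ω => ξ (T 0 ω) ω) P)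
    (F : ℝ → ℝ) (hF : Measurable F) (C : ℝ) (hC : ∀ x, |F x| ≤ C) (k : ℕ) :
    ∫ ω, F (ξ (∑ i ∈ Finset.range (k+1), T i ω) ω) ∂P
      = ∫ ω, ∫ ω₁, F (ξ (∑ i ∈ Finset.range k, T i ω) ω + L ω₁) ∂P ∂P := by
  have hmeas : ∀ r, Measurable (ξ r) := fun r => hunc.of_uncurry_left
  set Θ : Ω → ℝ := fun ω => ∑ i ∈ Finset.range k, T i ω with hΘdef
  set Θ' : Ω → ℝ := fun ω => ∑ i ∈ Finset.range (k+1), T i ω with hΘ'def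
  have hΘm : Measurable Θ := Finset.measurable_sum _ fun i _ => hTmeas i
  have hΘ'm : Measurable Θ' := Finset.measurable_sum _ fun i _ => hTmeas i
  have hTae : ∀ᵐ ω ∂P, ∀ i, 0 ≤ T i ω := ae_all_iff.mpr hT0
  have hΘ0 : ∀ᵐ ω ∂P, 0 ≤ Θ ω := by
    filter_upwards [hTae] with ω h
    exact Finset.sum_nonneg fun i _ => h i
  have hΘ'0 : ∀ᵐ ω ∂P, 0 ≤ Θ' ω := by
    filter_upwards [hTae] with ω h
    exact Finset.sum_nonneg fun i _ => h i
  -- independence of time functionals from the path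
  have hindΘ : IndepFun Θ (fun ω => fun t : ℝ => ξ t ω) P := by
    have hs : Measurable (fun τ : ℕ → ℝ => ∑ i ∈ Finset.range k, τ i) :=
      Finset.measurable_sum _ fun i _ => measurable_pi_apply i
    exact hTindep.comp hs measurable_id
  have hindΘ' : IndepFun Θ' (fun ω => fun t : ℝ => ξ t ω) P := by
    have hs : Measurable (fun τ : ℕ → ℝ => ∑ i ∈ Finset.range (k+1), τ i) :=
      Finset.measurable_sum _ fun i _ => measurable_pi_apply i
    exact hTindep.comp hs measurable_id
  have hindT0 : IndepFun (T 0) (fun ω => fun t : ℝ => ξ t ω) P :=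
    hTindep.comp (measurable_pi_apply 0) measurable_id
  -- ρ₂ and its properties
  set ρ₂ : ℝ → ℝ → ℝ := fun s v => ∫ ω', ∫ ω'', F (ξ s ω'' + ξ v ω') ∂P ∂P with hρ₂def
  have hjm : Measurable fun r : ((ℝ × ℝ) × Ω) × Ω => F (ξ r.1.1.1 r.2 + ξ r.1.1.2 r.1.2) :=
    hF.comp ((hunc.comp ((measurable_fst.comp (measurable_fst.comp measurable_fst)).prodMk
      measurable_snd)).add (hunc.comp ((measurable_snd.comp
      (measurable_fst.comp measurable_fst)).prodMk (measurable_snd.comp measurable_fst))))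
  have hg1 : StronglyMeasurable fun q : (ℝ × ℝ) × Ω => ∫ ω'', F (ξ q.1.1 ω'' + ξ q.1.2 q.2) ∂P :=
    hjm.stronglyMeasurable.integral_prod_right'
  have hρ₂m : Measurable (Function.uncurry ρ₂) := by
    have : Function.uncurry ρ₂
        = fun p : ℝ × ℝ => ∫ ω', (fun q : (ℝ × ℝ) × Ω =>
          ∫ ω'', F (ξ q.1.1 ω'' + ξ q.1.2 q.2) ∂P) (p, ω') ∂P := rfl
    rw [this]
    exact hg1.integral_prod_right'.measurable
  have hρ₂b : ∀ s v, |ρ₂ s v| ≤ C := by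
    intro s v
    apply abs_integral_le
    intro ω'
    apply abs_integral_le
    intro ω''
    exact hC _
  -- LHS chain
  have E1 : ∫ ω, F (ξ (Θ' ω) ω) ∂P = ∫ ω, ∫ ω', F (ξ (Θ' ω) ω') ∂P ∂P :=
    freeze P ξ hunc hcad Θ' hΘ'm hΘ'0 hindΘ' F hF C hC
  have E2 : ∫ ω, ∫ ω', F (ξ (Θ' ω) ω') ∂P ∂P = ∫ ω, ρ₂ (Θ ω) (T k ω) ∂P := by
    apply integral_congr_ae
    filter_upwards [hΘ0, hT0 k] with ω h1 h2
    have hsum : Θ' ω = Θ ω + T k ω := Finset.sum_range_succ _ _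
    rw [hsum]
    exact incr_split P ξ hunc h0 hinc hstat (Θ ω) (T k ω) h1 h2 F hF C hC
  have hindΘT : IndepFun Θ (T k) P := by
    have h := hTiid.indepFun_sum_range_succ hTmeas k
    have he : (∑ j ∈ Finset.range k, T j) = Θ := by
      funext ω; simp [hΘdef, Finset.sum_apply]
    rwa [he] at h
  have E3 : ∫ ω, ρ₂ (Θ ω) (T k ω) ∂P = ∫ ω, ∫ ω', ρ₂ (Θ ω) (T k ω') ∂P ∂P :=
    indep_fubini P hΘm (hTmeas k) hindΘT ρ₂ hρ₂m C (fun x y => hρ₂b x y)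
  have E4 : ∀ x : ℝ, ∫ ω', ρ₂ x (T k ω') ∂P = ∫ ω', ρ₂ x (T 0 ω') ∂P := by
    intro x
    have hsec : Measurable (ρ₂ x) := hρ₂m.of_uncurry_left
    calc ∫ ω', ρ₂ x (T k ω') ∂P = ∫ y, ρ₂ x y ∂(P.map (T k)) :=
          (integral_map (hTmeas k).aemeasurable hsec.aestronglyMeasurable).symm
      _ = ∫ y, ρ₂ x y ∂(P.map (T 0)) := by rw [hTlaw k]
      _ = ∫ ω', ρ₂ x (T 0 ω') ∂P :=
          integral_map (hTmeas 0).aemeasurable hsec.aestronglyMeasurable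
  -- RHS chain
  set q : ℝ → ℝ := fun x => ∫ ω₁, F (x + L ω₁) ∂P with hqdef
  have hqm : Measurable q := by
    have : Measurable fun p : ℝ × Ω => F (p.1 + L p.2) :=
      hF.comp (measurable_fst.add (hL.comp measurable_snd))
    exact this.stronglyMeasurable.integral_prod_right'.measurable
  have hqb : ∀ x, |q x| ≤ C := fun x => abs_integral_le P _ C fun ω₁ => hC _
  set q' : ℝ → ℝ := fun x => ∫ ω₁, ∫ ω₂, F (x + ξ (T 0 ω₁) ω₂) ∂P ∂P with hq'def
  have hqq' : ∀ x, q x = q' x := by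
    intro x
    have hg : Measurable fun y : ℝ => F (x + y) := hF.comp (measurable_const.add measurable_id)
    have hS1m : Measurable (fun ω => ξ (T 0 ω) ω) :=
      hunc.comp ((hTmeas 0).prodMk measurable_id)
    calc q x = ∫ y, F (x + y) ∂(P.map L) :=
          (integral_map hL.aemeasurable hg.aestronglyMeasurable).symm
      _ = ∫ y, F (x + y) ∂(P.map (fun ω => ξ (T 0 ω) ω)) := by rw [hLlaw]
      _ = ∫ ω₁, F (x + ξ (T 0 ω₁) ω₁) ∂P :=
          integral_map hS1m.aemeasurable hg.aestronglyMeasurable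
      _ = q' x := freeze P ξ hunc hcad (T 0) (hTmeas 0) (hT0 0) hindT0
            (fun y => F (x + y)) hg C (fun y => hC _)
  have R2 : ∫ ω, q (ξ (Θ ω) ω) ∂P = ∫ ω, ∫ ω', q (ξ (Θ ω) ω') ∂P ∂P :=
    freeze P ξ hunc hcad Θ hΘm hΘ0 hindΘ q hqm C hqb
  -- key Fubini identity
  have key : ∀ s : ℝ, ∫ ω', ρ₂ s (T 0 ω') ∂P = ∫ ω', q' (ξ s ω') ∂P := by
    intro s
    have hswap1 : ∀ c : Ω, ∫ b, ∫ a, F (ξ s a + ξ (T 0 c) b) ∂P ∂P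
        = ∫ a, ∫ b, F (ξ s a + ξ (T 0 c) b) ∂P ∂P := by
      intro c
      apply integral_integral_swap
      apply integrable_of_bound
      · exact (hF.comp (((hmeas s).comp measurable_snd).add
          ((hmeas (T 0 c)).comp measurable_fst))).aestronglyMeasurable
      · exact fun p => hC _
    have hmid : Measurable fun p : Ω × Ω => ∫ b, F (ξ s p.2 + ξ (T 0 p.1) b) ∂P := by
      have : Measurable fun r : (Ω × Ω) × Ω => F (ξ s r.1.2 + ξ (T 0 r.1.1) r.2) := by
        apply hF.comp
        exact ((hmeas s).comp (measurable_snd.comp measurable_fst)).add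
          (hunc.comp (((hTmeas 0).comp (measurable_fst.comp measurable_fst)).prodMk
            measurable_snd))
      exact this.stronglyMeasurable.integral_prod_right'.measurable
    have hswap2 : ∫ c, ∫ a, ∫ b, F (ξ s a + ξ (T 0 c) b) ∂P ∂P ∂P
        = ∫ a, ∫ c, ∫ b, F (ξ s a + ξ (T 0 c) b) ∂P ∂P ∂P := by
      apply integral_integral_swap
      apply integrable_of_bound
      · exact hmid.aestronglyMeasurable
      · intro p
        exact abs_integral_le P _ C fun b => hC _
    calc ∫ ω', ρ₂ s (T 0 ω') ∂P
        = ∫ c, ∫ a, ∫ b, F (ξ s a + ξ (T 0 c) b) ∂P ∂P ∂P := by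
          simp only [hρ₂def]
          exact integral_congr_ae (Filter.Eventually.of_forall hswap1)
      _ = ∫ a, ∫ c, ∫ b, F (ξ s a + ξ (T 0 c) b) ∂P ∂P ∂P := hswap2
      _ = ∫ ω', q' (ξ s ω') ∂P := rfl
  -- conclude
  calc ∫ ω, F (ξ (Θ' ω) ω) ∂P
      = ∫ ω, ρ₂ (Θ ω) (T k ω) ∂P := by rw [E1, E2]
    _ = ∫ ω, ∫ ω', ρ₂ (Θ ω) (T k ω') ∂P ∂P := E3
    _ = ∫ ω, ∫ ω', ρ₂ (Θ ω) (T 0 ω') ∂P ∂P := integral_congr_ae (Filter.Eventually.of_forall fun ω => E4 (Θ ω))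
    _ = ∫ ω, ∫ ω', q' (ξ (Θ ω) ω') ∂P ∂P := integral_congr_ae (Filter.Eventually.of_forall fun ω => key (Θ ω))
    _ = ∫ ω, ∫ ω', q (ξ (Θ ω) ω') ∂P ∂P := by simp_rw [hqq']
    _ = ∫ ω, q (ξ (Θ ω) ω) ∂P := R2.symm
    _ = ∫ ω, ∫ ω₁, F (ξ (Θ ω) ω + L ω₁) ∂P ∂P := rfl


end RD

/-- The renewal decomposition `r (t) = Σ_{k<n} E[exp (χ S_k) g (t - S_k)] + δ_n (t)`
for the tail of the exponential functional, where `S_k = ξ_{Θ_k}` is the Lévy process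
sampled along a random walk of independent standard exponential times `Θ_k = T_1 + ⋯ + T_k`,
`r (t) = exp (χ t) P (A_∞ > exp t)`,
`g (t) = exp (χ t) (P (A > exp t) - P (M A > exp t))` and
`δ_n (t) = exp (χ t) P (exp (S_n) A > exp t)`. -/


theorem renewal_decomposition_of_tail
    {Ω : Type*} [MeasurableSpace Ω] (P : Measure Ω) [IsProbabilityMeasure P]
    (ξ : ℝ → Ω → ℝ) (hξ : IsLevyProcess P ξ)
    (χ : ℝ) (hχ : 0 < χ)
    (hcramer : ∫⁻ ω, ENNReal.ofReal (Real.exp (χ * ξ 1 ω)) ∂P = 1)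
    (hplus : ∫⁻ ω, ENNReal.ofReal (max (ξ 1 ω) 0) ∂P < ⊤)
    (hmean : ∫⁻ ω, ENNReal.ofReal (max (ξ 1 ω) 0) ∂P
        < ∫⁻ ω, ENNReal.ofReal (max (-(ξ 1 ω)) 0) ∂P)
    -- `T i` are i.i.d. standard exponential variables, independent of `ξ`
    (T : ℕ → Ω → ℝ) (hTmeas : ∀ i, Measurable (T i))
    (hTiid : iIndepFun T P)
    (hTexp : ∀ i, Measure.map (T i) P = ProbabilityTheory.expMeasure 1)
    (hTindep : IndepFun (fun ω => fun i => T i ω) (fun ω => fun t : ℝ => ξ t ω) P)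
    -- `(M, A)` is independent of `(ξ, T)`, with `M` independent of `A`,
    -- `M` distributed as `exp (S 1)` and `A` distributed as `A_∞`
    (M A : Ω → ℝ) (hMmeas : Measurable M) (hAmeas : Measurable A)
    (hMA : IndepFun M A P)
    (hMAind : IndepFun (fun ω => (M ω, A ω))
        (fun ω => ((fun t : ℝ => ξ t ω), (fun i => T i ω))) P)
    (hMlaw : ∀ x : ℝ, P {ω | x < M ω}
        = P {ω | x < Real.exp (ξ (∑ i ∈ Finset.range 1, T i ω) ω)})
    (hAlaw : ∀ x : ℝ,
        P {ω | ENNReal.ofReal x < ∫⁻ s in Set.Ioi (0 : ℝ), ENNReal.ofReal (Real.exp (ξ s ω))}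
        = P {ω | x < A ω}) :
    ∀ n : ℕ, 1 ≤ n → ∀ t : ℝ,
      -- r (t)
      Real.exp (χ * t) *
        (P {ω | ENNReal.ofReal (Real.exp t)
            < ∫⁻ s in Set.Ioi (0 : ℝ), ENNReal.ofReal (Real.exp (ξ s ω))}).toReal
      = (∑ k ∈ Finset.range n,
          -- E[exp (χ S_k) * g (t - S_k)]
          ∫ ω, Real.exp (χ * ξ (∑ i ∈ Finset.range k, T i ω) ω) *
            (Real.exp (χ * (t - ξ (∑ i ∈ Finset.range k, T i ω) ω)) *
              ((P {ω' | Real.exp (t - ξ (∑ i ∈ Finset.range k, T i ω) ω) < A ω'}).toReal -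
               (P {ω' | Real.exp (t - ξ (∑ i ∈ Finset.range k, T i ω) ω)
                  < M ω' * A ω'}).toReal)) ∂P)
        -- + δ_n (t)
        + Real.exp (χ * t) *
            (P {ω | Real.exp t
                < Real.exp (ξ (∑ i ∈ Finset.range n, T i ω) ω) * A ω}).toReal := by
  obtain ⟨hmeas1, hunc, h0, hinc, hstat, hpaths⟩ := hξ
  have hcad : ∀ᵐ ω ∂P, ∀ t, 0 ≤ t → ContinuousWithinAt (fun s => ξ s ω) (Ici t) t := by
    filter_upwards [hpaths] with ω h t ht
    exact (h t ht).1
  have hmeas : ∀ r : ℝ, Measurable (ξ r) := fun r => hunc.of_uncurry_left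
  have hSm : ∀ k : ℕ, Measurable (fun ω => ξ (∑ i ∈ Finset.range k, T i ω) ω) := fun k => by
    have h : Measurable fun ω : Ω => ((∑ i ∈ Finset.range k, T i ω : ℝ), ω) :=
      (Finset.measurable_sum _ fun i _ => hTmeas i).prodMk measurable_id
    exact hunc.comp h
  -- T_i are nonnegative a.s.
  have hT0 : ∀ i, ∀ᵐ ω ∂P, 0 ≤ T i ω := by
    intro i
    rw [ae_iff]
    have hset : {ω | ¬ 0 ≤ T i ω} = T i ⁻¹' (Iio 0) := by ext ω; simp [not_le]
    rw [hset, ← Measure.map_apply (hTmeas i) measurableSet_Iio, hTexp i]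
    show expMeasure 1 (Iio 0) = 0
    rw [expMeasure, gammaMeasure, withDensity_apply _ measurableSet_Iio]
    exact lintegral_gammaPDF_of_nonpos le_rfl
  have hTlaw : ∀ i, Measure.map (T i) P = Measure.map (T 0) P := fun i => by
    rw [hTexp i, hTexp 0]
  have hΘae : ∀ k : ℕ, ∀ᵐ ω ∂P, 0 ≤ ∑ i ∈ Finset.range k, T i ω := by
    intro k
    filter_upwards [ae_all_iff.mpr hT0] with ω h
    exact Finset.sum_nonneg fun i _ => h i
  -- the law of log M is the law of ξ (T 0)
  have hEm : Measurable (fun ω => Real.exp (ξ (∑ i ∈ Finset.range 1, T i ω) ω)) :=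
    Real.measurable_exp.comp (hSm 1)
  have hmapM : P.map M = P.map (fun ω => Real.exp (ξ (∑ i ∈ Finset.range 1, T i ω) ω)) := by
    apply Measure.ext_of_Iic
    intro x
    rw [Measure.map_apply hMmeas measurableSet_Iic, Measure.map_apply hEm measurableSet_Iic]
    have h1 : M ⁻¹' (Iic x) = {ω | x < M ω}ᶜ := by ext ω; simp [not_lt]
    have h2 : (fun ω => Real.exp (ξ (∑ i ∈ Finset.range 1, T i ω) ω)) ⁻¹' (Iic x)
        = {ω | x < Real.exp (ξ (∑ i ∈ Finset.range 1, T i ω) ω)}ᶜ := by ext ω; simp [not_lt]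
    rw [h1, h2, measure_compl (measurableSet_lt measurable_const hMmeas) (measure_ne_top _ _),
      measure_compl (measurableSet_lt measurable_const hEm) (measure_ne_top _ _), hMlaw x]
  have hLlaw : Measure.map (fun ω => Real.log (M ω)) P
      = Measure.map (fun ω => ξ (T 0 ω) ω) P := by
    have hc1 : Measure.map (fun ω => Real.log (M ω)) P
        = Measure.map Real.log (Measure.map M P) :=
      (Measure.map_map Real.measurable_log hMmeas).symm
    rw [hc1, hmapM, Measure.map_map Real.measurable_log hEm]
    congr 1
    funext ω
    show Real.log (Real.exp _) = _
    rw [Real.log_exp, Finset.sum_range_one]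
  -- M is a.s. positive
  have hM0 : ∀ᵐ ω ∂P, 0 < M ω := by
    have hM1 : P {ω | 0 < M ω} = 1 := by
      rw [hMlaw 0]
      have : {ω | (0:ℝ) < Real.exp (ξ (∑ i ∈ Finset.range 1, T i ω) ω)} = univ :=
        eq_univ_of_forall fun ω => Real.exp_pos _
      rw [this, measure_univ]
    rw [ae_iff]
    have h3 : {ω | ¬ 0 < M ω} = {ω | 0 < M ω}ᶜ := rfl
    rw [h3, measure_compl (measurableSet_lt measurable_const hMmeas) (measure_ne_top _ _),
      hM1, measure_univ, tsub_self]
  intro n hn t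
  -- the functions F and G
  set F : ℝ → ℝ := fun x => (P {ω' | Real.exp (t - x) < A ω'}).toReal with hFdef
  set G : ℝ → ℝ := fun x => (P {ω' | Real.exp (t - x) < M ω' * A ω'}).toReal with hGdef
  have hFmono : Monotone F := by
    intro x y hxy
    simp only [hFdef]
    refine ENNReal.toReal_mono (measure_ne_top _ _) (measure_mono ?_)
    intro a ha
    simp only [mem_setOf_eq] at *
    have : Real.exp (t - y) ≤ Real.exp (t - x) := Real.exp_le_exp.mpr (by linarith)
    linarith
  have hGmono : Monotone G := by
    intro x y hxy
    simp only [hGdef]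
    refine ENNReal.toReal_mono (measure_ne_top _ _) (measure_mono ?_)
    intro a ha
    simp only [mem_setOf_eq] at *
    have : Real.exp (t - y) ≤ Real.exp (t - x) := Real.exp_le_exp.mpr (by linarith)
    linarith
  have hFm : Measurable F := hFmono.measurable
  have hGm : Measurable G := hGmono.measurable
  have hFb : ∀ x, |F x| ≤ 1 := by
    intro x
    rw [abs_of_nonneg ENNReal.toReal_nonneg]
    exact RD.toReal_prob_le_one P _
  have hGb : ∀ x, |G x| ≤ 1 := by
    intro x
    rw [abs_of_nonneg ENNReal.toReal_nonneg]
    exact RD.toReal_prob_le_one P _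
  -- splitting G via independence of M and A
  have hGsplit : ∀ s : ℝ, G s = ∫ ω₁, F (s + Real.log (M ω₁)) ∂P := by
    intro s
    have hE2 : MeasurableSet {p : ℝ × ℝ | Real.exp (t - s) < p.1 * p.2} :=
      measurableSet_lt measurable_const (measurable_fst.mul measurable_snd)
    set kk : ℝ → ℝ → ℝ :=
      fun m a => ({p : ℝ × ℝ | Real.exp (t - s) < p.1 * p.2}).indicator
        (fun _ => (1:ℝ)) (m, a) with hkkdef
    have hkk : Measurable (Function.uncurry kk) := by
      have h4 : Function.uncurry kk
          = ({p : ℝ × ℝ | Real.exp (t - s) < p.1 * p.2}).indicator (fun _ => (1:ℝ)) := rfl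
      rw [h4]; exact measurable_const.indicator hE2
    have hkkb : ∀ x y, |kk x y| ≤ 1 := by
      intro x y
      simp only [hkkdef, Set.indicator_apply]
      split <;> simp
    have hstep := RD.indep_fubini P hMmeas hAmeas hMA kk hkk 1 hkkb
    have hleft : ∫ ω, kk (M ω) (A ω) ∂P = G s := by
      have hpe : ∀ ω, kk (M ω) (A ω)
          = ({ω | Real.exp (t - s) < M ω * A ω}).indicator (fun _ => (1:ℝ)) ω := by
        intro ω
        by_cases h : Real.exp (t - s) < M ω * A ω <;>
          simp [hkkdef, Set.indicator_apply, h]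
      rw [integral_congr_ae (Filter.Eventually.of_forall hpe),
        integral_indicator_const (1:ℝ) (measurableSet_lt measurable_const (hMmeas.mul hAmeas) :
          MeasurableSet {ω | Real.exp (t - s) < M ω * A ω})]
      simp [hGdef, measureReal_def]
    have hright : ∀ᵐ ω₁ ∂P, ∫ ω₂, kk (M ω₁) (A ω₂) ∂P = F (s + Real.log (M ω₁)) := by
      filter_upwards [hM0] with ω₁ hm
      have hkey : Real.exp (t - (s + Real.log (M ω₁))) * M ω₁ = Real.exp (t - s) := by
        have h2 : Real.exp (t - (s + Real.log (M ω₁))) * Real.exp (Real.log (M ω₁))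
            = Real.exp (t - s) := by
          rw [← Real.exp_add]; congr 1; ring
        rwa [Real.exp_log hm] at h2
      have hiff : ∀ a : ℝ, (Real.exp (t - s) < M ω₁ * a
          ↔ Real.exp (t - (s + Real.log (M ω₁))) < a) := by
        intro a
        constructor <;> intro h <;> nlinarith [Real.exp_pos (t - (s + Real.log (M ω₁)))]
      have hpe : ∀ ω₂, kk (M ω₁) (A ω₂)
          = ({ω₂ | Real.exp (t - (s + Real.log (M ω₁))) < A ω₂}).indicator
            (fun _ => (1:ℝ)) ω₂ := by
        intro ω₂
        by_cases h : Real.exp (t - s) < M ω₁ * A ω₂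
        · simp [hkkdef, Set.indicator_apply, h, (hiff (A ω₂)).mp h]
        · have h5 : ¬ Real.exp (t - (s + Real.log (M ω₁))) < A ω₂ :=
            fun hh => h ((hiff (A ω₂)).mpr hh)
          simp [hkkdef, Set.indicator_apply, h, h5]
      rw [integral_congr_ae (Filter.Eventually.of_forall hpe),
        integral_indicator_const (1:ℝ) (measurableSet_lt measurable_const hAmeas)]
      simp [hFdef, measureReal_def]
    rw [← hleft, hstep]
    exact integral_congr_ae hright
  -- key renewal step
  have hGF : ∀ k : ℕ, ∫ ω, G (ξ (∑ i ∈ Finset.range k, T i ω) ω) ∂P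
      = ∫ ω, F (ξ (∑ i ∈ Finset.range (k+1), T i ω) ω) ∂P := by
    intro k
    have h1 : ∀ ω, G (ξ (∑ i ∈ Finset.range k, T i ω) ω)
        = ∫ ω₁, F (ξ (∑ i ∈ Finset.range k, T i ω) ω + Real.log (M ω₁)) ∂P := fun ω =>
      hGsplit _
    rw [integral_congr_ae (Filter.Eventually.of_forall h1)]
    exact (RD.stepC P ξ hunc hcad h0 hinc hstat T hTmeas hTiid hT0 hTlaw hTindep
      (fun ω => Real.log (M ω)) (Real.measurable_log.comp hMmeas) hLlaw F hFm 1 hFb k).symm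
  -- delta term
  have hδ : (P {ω | Real.exp t < Real.exp (ξ (∑ i ∈ Finset.range n, T i ω) ω) * A ω}).toReal
      = ∫ ω, F (ξ (∑ i ∈ Finset.range n, T i ω) ω) ∂P := by
    set ψ : (ℝ → ℝ) × (ℕ → ℝ) → ℝ := fun p => RD.Xi (∑ i ∈ Finset.range n, p.2 i, p.1)
      with hψdef
    have hψm : Measurable ψ := RD.measurable_Xi.comp
      ((Finset.measurable_sum _ fun i _ => (measurable_pi_apply i).comp measurable_snd).prodMk
        measurable_fst)
    set St : Ω → ℝ := fun ω => ψ ((fun r : ℝ => ξ r ω), (fun i => T i ω)) with hStdef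
    have hStm : Measurable St := hψm.comp
      ((measurable_pi_lambda _ fun r => hmeas r).prodMk
        (measurable_pi_lambda _ fun i => hTmeas i))
    have hindAS : IndepFun A St P := hMAind.comp measurable_snd hψm
    have haeS : ∀ᵐ ω ∂P, St ω = ξ (∑ i ∈ Finset.range n, T i ω) ω := by
      filter_upwards [hcad, hΘae n] with ω h1 h2
      exact RD.Xi_eq (h1 _ h2)
    have hE3 : MeasurableSet {p : ℝ × ℝ | Real.exp t < Real.exp p.1 * p.2} :=
      measurableSet_lt measurable_const
        ((Real.measurable_exp.comp measurable_fst).mul measurable_snd)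
    set kk : ℝ → ℝ → ℝ := fun sv a =>
      ({p : ℝ × ℝ | Real.exp t < Real.exp p.1 * p.2}).indicator (fun _ => (1:ℝ)) (sv, a)
      with hkkdef
    have hkk : Measurable (Function.uncurry kk) := by
      have h4 : Function.uncurry kk
          = ({p : ℝ × ℝ | Real.exp t < Real.exp p.1 * p.2}).indicator (fun _ => (1:ℝ)) := rfl
      rw [h4]; exact measurable_const.indicator hE3
    have hkkb : ∀ x y, |kk x y| ≤ 1 := by
      intro x y
      simp only [hkkdef, Set.indicator_apply]
      split <;> simp
    have hiff : ∀ sv a : ℝ, (Real.exp t < Real.exp sv * a ↔ Real.exp (t - sv) < a) := by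
      intro sv a
      have hkey : Real.exp (t - sv) * Real.exp sv = Real.exp t := by
        rw [← Real.exp_add]; congr 1; ring
      constructor <;> intro h <;> nlinarith [Real.exp_pos sv, Real.exp_pos (t - sv)]
    have h1 : ∫ ω, kk (ξ (∑ i ∈ Finset.range n, T i ω) ω) (A ω) ∂P
        = (P {ω | Real.exp t < Real.exp (ξ (∑ i ∈ Finset.range n, T i ω) ω) * A ω}).toReal := by
      have hpe : ∀ ω, kk (ξ (∑ i ∈ Finset.range n, T i ω) ω) (A ω)
          = ({ω | Real.exp t < Real.exp (ξ (∑ i ∈ Finset.range n, T i ω) ω) * A ω}).indicator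
            (fun _ => (1:ℝ)) ω := by
        intro ω
        by_cases h : Real.exp t < Real.exp (ξ (∑ i ∈ Finset.range n, T i ω) ω) * A ω <;>
          simp [hkkdef, Set.indicator_apply, h]
      have hms : MeasurableSet {ω | Real.exp t
          < Real.exp (ξ (∑ i ∈ Finset.range n, T i ω) ω) * A ω} := by
        apply measurableSet_lt measurable_const
        exact ((hSm n).exp).mul hAmeas
      rw [integral_congr_ae (Filter.Eventually.of_forall hpe),
        integral_indicator_const (1:ℝ) hms]
      simp [measureReal_def]
    have h2 : ∫ ω, kk (ξ (∑ i ∈ Finset.range n, T i ω) ω) (A ω) ∂P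
        = ∫ ω, kk (St ω) (A ω) ∂P := by
      apply integral_congr_ae
      filter_upwards [haeS] with ω h
      rw [h]
    have h3 := RD.indep_fubini P hStm hAmeas hindAS.symm kk hkk 1 hkkb
    have h4 : ∀ sv : ℝ, ∫ ω', kk sv (A ω') ∂P = F sv := by
      intro sv
      have hpe : ∀ ω', kk sv (A ω')
          = ({ω' | Real.exp (t - sv) < A ω'}).indicator (fun _ => (1:ℝ)) ω' := by
        intro ω'
        by_cases h : Real.exp t < Real.exp sv * A ω'
        · simp [hkkdef, Set.indicator_apply, h, (hiff sv (A ω')).mp h]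
        · have h5 : ¬ Real.exp (t - sv) < A ω' := fun hh => h ((hiff sv (A ω')).mpr hh)
          simp [hkkdef, Set.indicator_apply, h, h5]
      rw [integral_congr_ae (Filter.Eventually.of_forall hpe),
        integral_indicator_const (1:ℝ) (measurableSet_lt measurable_const hAmeas)]
      simp [hFdef, measureReal_def]
    have h5 : ∫ ω, ∫ ω', kk (St ω) (A ω') ∂P ∂P = ∫ ω, F (St ω) ∂P :=
      integral_congr_ae (Filter.Eventually.of_forall fun ω => h4 (St ω))
    have h6 : ∫ ω, F (St ω) ∂P = ∫ ω, F (ξ (∑ i ∈ Finset.range n, T i ω) ω) ∂P := by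
      apply integral_congr_ae
      filter_upwards [haeS] with ω h
      rw [h]
    rw [← h1, h2, h3, h5, h6]
  -- integrability
  have hintF : ∀ k : ℕ, Integrable (fun ω => F (ξ (∑ i ∈ Finset.range k, T i ω) ω)) P :=
    fun k => RD.integrable_of_bound P ((hFm.comp (hSm k)).aestronglyMeasurable) 1
      (fun ω => hFb _)
  have hintG : ∀ k : ℕ, Integrable (fun ω => G (ξ (∑ i ∈ Finset.range k, T i ω) ω)) P :=
    fun k => RD.integrable_of_bound P ((hGm.comp (hSm k)).aestronglyMeasurable) 1
      (fun ω => hGb _)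
  -- the summand identity
  have hsummand : ∀ k : ℕ,
      (∫ ω, Real.exp (χ * ξ (∑ i ∈ Finset.range k, T i ω) ω) *
        (Real.exp (χ * (t - ξ (∑ i ∈ Finset.range k, T i ω) ω)) *
          ((P {ω' | Real.exp (t - ξ (∑ i ∈ Finset.range k, T i ω) ω) < A ω'}).toReal -
           (P {ω' | Real.exp (t - ξ (∑ i ∈ Finset.range k, T i ω) ω)
              < M ω' * A ω'}).toReal)) ∂P)
      = Real.exp (χ * t) * ((∫ ω, F (ξ (∑ i ∈ Finset.range k, T i ω) ω) ∂P)
          - ∫ ω, F (ξ (∑ i ∈ Finset.range (k+1), T i ω) ω) ∂P) := by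
    intro k
    have hpt : ∀ ω, Real.exp (χ * ξ (∑ i ∈ Finset.range k, T i ω) ω) *
        (Real.exp (χ * (t - ξ (∑ i ∈ Finset.range k, T i ω) ω)) *
          (F (ξ (∑ i ∈ Finset.range k, T i ω) ω) - G (ξ (∑ i ∈ Finset.range k, T i ω) ω)))
        = Real.exp (χ * t) *
            (F (ξ (∑ i ∈ Finset.range k, T i ω) ω) - G (ξ (∑ i ∈ Finset.range k, T i ω) ω)) := by
      intro ω
      have h7 : χ * ξ (∑ i ∈ Finset.range k, T i ω) ω
          + χ * (t - ξ (∑ i ∈ Finset.range k, T i ω) ω) = χ * t := by ring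
      rw [← mul_assoc, ← Real.exp_add, h7]
    calc (∫ ω, Real.exp (χ * ξ (∑ i ∈ Finset.range k, T i ω) ω) *
        (Real.exp (χ * (t - ξ (∑ i ∈ Finset.range k, T i ω) ω)) *
          ((P {ω' | Real.exp (t - ξ (∑ i ∈ Finset.range k, T i ω) ω) < A ω'}).toReal -
           (P {ω' | Real.exp (t - ξ (∑ i ∈ Finset.range k, T i ω) ω)
              < M ω' * A ω'}).toReal)) ∂P)
        = ∫ ω, Real.exp (χ * t) *
            (F (ξ (∑ i ∈ Finset.range k, T i ω) ω)
              - G (ξ (∑ i ∈ Finset.range k, T i ω) ω)) ∂P :=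
          integral_congr_ae (Filter.Eventually.of_forall hpt)
      _ = Real.exp (χ * t) * ∫ ω, (F (ξ (∑ i ∈ Finset.range k, T i ω) ω)
              - G (ξ (∑ i ∈ Finset.range k, T i ω) ω)) ∂P := integral_const_mul _ _
      _ = Real.exp (χ * t) * ((∫ ω, F (ξ (∑ i ∈ Finset.range k, T i ω) ω) ∂P)
              - ∫ ω, G (ξ (∑ i ∈ Finset.range k, T i ω) ω) ∂P) := by
            rw [integral_sub (hintF k) (hintG k)]
      _ = Real.exp (χ * t) * ((∫ ω, F (ξ (∑ i ∈ Finset.range k, T i ω) ω) ∂P)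
              - ∫ ω, F (ξ (∑ i ∈ Finset.range (k+1), T i ω) ω) ∂P) := by rw [hGF k]
  -- telescoping
  have hsum : (∑ k ∈ Finset.range n,
      ∫ ω, Real.exp (χ * ξ (∑ i ∈ Finset.range k, T i ω) ω) *
        (Real.exp (χ * (t - ξ (∑ i ∈ Finset.range k, T i ω) ω)) *
          ((P {ω' | Real.exp (t - ξ (∑ i ∈ Finset.range k, T i ω) ω) < A ω'}).toReal -
           (P {ω' | Real.exp (t - ξ (∑ i ∈ Finset.range k, T i ω) ω)
              < M ω' * A ω'}).toReal)) ∂P)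
      = Real.exp (χ * t) * ((∫ ω, F (ξ (∑ i ∈ Finset.range 0, T i ω) ω) ∂P)
          - ∫ ω, F (ξ (∑ i ∈ Finset.range n, T i ω) ω) ∂P) := by
    rw [Finset.sum_congr rfl (fun k _ => hsummand k), ← Finset.mul_sum,
      Finset.sum_range_sub' (fun k => ∫ ω, F (ξ (∑ i ∈ Finset.range k, T i ω) ω) ∂P) n]
  -- value at 0
  have hIF0 : ∫ ω, F (ξ (∑ i ∈ Finset.range 0, T i ω) ω) ∂P
      = (P {ω' | Real.exp t < A ω'}).toReal := by
    have h1 : ∀ᵐ ω ∂P, F (ξ (∑ i ∈ Finset.range 0, T i ω) ω)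
        = (P {ω' | Real.exp t < A ω'}).toReal := by
      filter_upwards [h0] with ω hω
      have h8 : (∑ i ∈ Finset.range 0, T i ω) = (0:ℝ) := Finset.sum_range_zero _
      rw [h8, hω]
      simp [hFdef, measureReal_def]
    rw [integral_congr_ae h1, integral_const]
    simp
  -- conclude
  rw [hAlaw (Real.exp t), hsum, hIF0, hδ]
  ring
end

section
/- Let ξ = (ξ_t)_{t≥0} be a real Lévy process (in particular with almost surely càdlàg paths), let Θ be a standard exponential random variable independent of ξ, and let r > 0. If P( ξ_Θ ∈ rℤ ) = 1, then P( ξ_t ∈ rℤ ) = 1 for every t ≥ 0. -/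
open MeasureTheory ProbabilityTheory Filter Set
open scoped ENNReal

lemma isClosed_int_multiples {r : ℝ} (hr : r ≠ 0) :
    IsClosed {x : ℝ | ∃ k : ℤ, x = r * k} := by
  have he : {x : ℝ | ∃ k : ℤ, x = r * k} = (fun x => x / r) ⁻¹' (Set.range ((↑) : ℤ → ℝ)) := by
    ext x
    simp only [Set.mem_setOf_eq, Set.mem_preimage, Set.mem_range]
    constructor
    · rintro ⟨k, rfl⟩
      exact ⟨k, by field_simp⟩
    · rintro ⟨k, hk⟩
      refine ⟨k, by rw [hk]; field_simp⟩
  rw [he]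
  exact Int.isClosedEmbedding_coe_real.isClosed_range.preimage (continuous_id.div_const r)

lemma measurableSet_int_multiples (r : ℝ) :
    MeasurableSet {x : ℝ | ∃ k : ℤ, x = r * k} := by
  have : {x : ℝ | ∃ k : ℤ, x = r * k} = Set.range (fun k : ℤ => r * k) := by
    ext x; simp [eq_comm]
  rw [this]
  exact (Set.countable_range _).measurableSet

lemma prob_eq_one_of_ae {Ω : Type*} [MeasurableSpace Ω] (P : Measure Ω) [IsProbabilityMeasure P]
    {s : Set Ω} (hs : MeasurableSet s) (h : ∀ᵐ ω ∂P, ω ∈ s) : P s = 1 := by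
  rw [← prob_compl_eq_zero_iff hs]
  exact ae_iff.mp h

lemma ae_of_prob_eq_one {Ω : Type*} [MeasurableSpace Ω] (P : Measure Ω) [IsProbabilityMeasure P]
    {s : Set Ω} (hs : MeasurableSet s) (h : P s = 1) : ∀ᵐ ω ∂P, ω ∈ s :=
  ae_iff.mpr ((prob_compl_eq_zero_iff hs).mpr h)

/-- If `ξ` is a Lévy process, `Θ` is a standard exponential time independent of `ξ`,
and `ξ_Θ ∈ r ℤ` almost surely for some `r > 0`, then `ξ_t ∈ r ℤ` almost surely
for every `t ≥ 0`. -/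
theorem arithmetic_at_exponential_time
    {Ω : Type*} [MeasurableSpace Ω] (P : Measure Ω) [IsProbabilityMeasure P]
    (ξ : ℝ → Ω → ℝ) (hξ : IsLevyProcess P ξ)
    (Θ : Ω → ℝ) (hΘmeas : Measurable Θ)
    (hΘ : Measure.map Θ P = ProbabilityTheory.expMeasure 1)
    (hind : IndepFun Θ (fun ω => fun t : ℝ => ξ t ω) P)
    (r : ℝ) (hr : 0 < r)
    (h : P {ω | ∃ k : ℤ, ξ (Θ ω) ω = r * k} = 1) :
    ∀ t : ℝ, 0 ≤ t → P {ω | ∃ k : ℤ, ξ t ω = r * k} = 1 := by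
  classical
  obtain ⟨hmeas, hjoint, -, -, -, hcadlag⟩ := hξ
  set rZ : Set ℝ := {x : ℝ | ∃ k : ℤ, x = r * k} with hrZdef
  have hrZ : MeasurableSet rZ := measurableSet_int_multiples r
  -- path restricted to nonnegative dyadic rationals
  set Y : Ω → (ℤ × ℕ) → ℝ := fun ω p => ξ ((p.1 : ℝ) / 2 ^ p.2) ω with hYdef
  have hYmeas : Measurable Y := measurable_pi_lambda _ fun p => hmeas _
  -- dyadic approximations from above
  set d : ℕ → ℝ → ℝ := fun n s => (⌈s * 2 ^ n⌉ : ℝ) / 2 ^ n with hddef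
  have h2pos : ∀ n : ℕ, (0:ℝ) < 2 ^ n := fun n => by positivity
  have hd_ge : ∀ n s, s ≤ d n s := by
    intro n s
    rw [hddef]
    dsimp only
    rw [le_div_iff₀ (h2pos n)]
    exact Int.le_ceil _
  have hd_le : ∀ n s, d n s ≤ s + (1/2) ^ n := by
    intro n s
    rw [hddef]
    dsimp only
    rw [div_le_iff₀ (h2pos n)]
    have h1 : ((1:ℝ)/2) ^ n * 2 ^ n = 1 := by
      rw [div_pow, one_pow, div_mul_cancel₀]
      exact (h2pos n).ne'
    have h2 := (Int.ceil_lt_add_one (s * 2 ^ n)).le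
    nlinarith [h2pos n]
  have hd_tendsto : ∀ s : ℝ, Tendsto (fun n => d n s) atTop (nhdsWithin s (Set.Ici s)) := by
    intro s
    have h0 : Tendsto (fun n : ℕ => ((1:ℝ)/2) ^ n) atTop (nhds 0) :=
      tendsto_pow_atTop_nhds_zero_of_lt_one (by norm_num) (by norm_num)
    have hlim : Tendsto (fun n => d n s) atTop (nhds s) := by
      apply tendsto_of_tendsto_of_tendsto_of_le_of_le tendsto_const_nhds ?_
        (fun n => hd_ge n s) (fun n => hd_le n s)
      simpa using tendsto_const_nhds.add h0
    exact tendsto_nhdsWithin_iff.mpr ⟨hlim, Eventually.of_forall fun n => hd_ge n s⟩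
  -- right-continuity along the dyadic approximations
  have hrc : ∀ᵐ ω ∂P, ∀ s : ℝ, 0 ≤ s →
      Tendsto (fun n => ξ (d n s) ω) atTop (nhds (ξ s ω)) := by
    filter_upwards [hcadlag] with ω hω s hs
    exact ((hω s hs).1.tendsto).comp (hd_tendsto s)
  -- the two image measures
  set μ : Measure ℝ := P.map Θ with hμdef
  have hμexp : μ = expMeasure 1 := hΘ
  haveI hμprob : IsProbabilityMeasure μ := by
    rw [hμexp]; exact isProbabilityMeasure_expMeasure one_pos
  set ν : Measure ((ℤ × ℕ) → ℝ) := P.map Y with hνdef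
  haveI hνprob : IsProbabilityMeasure ν := Measure.isProbabilityMeasure_map hYmeas.aemeasurable
  have hμpos : ∀ᵐ s ∂μ, 0 < s := by
    rw [ae_iff]
    have hset : {s : ℝ | ¬ 0 < s} = Set.Iic 0 := by ext x; simp
    rw [hset, hμexp]
    have hexp : expMeasure 1 = volume.withDensity (gammaPDF 1 1) := rfl
    rw [hexp, withDensity_apply _ measurableSet_Iic,
      setLIntegral_congr (Iio_ae_eq_Iic (a := (0:ℝ))).symm]
    exact lintegral_gammaPDF_of_nonpos le_rfl
  have hΘpos : ∀ᵐ ω ∂P, 0 < Θ ω := by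
    apply ae_of_ae_map hΘmeas.aemeasurable
    rw [← hμdef]; exact hμpos
  -- the discretized evaluation functions on the product space
  set F : ℕ → ℝ × ((ℤ × ℕ) → ℝ) → ℝ := fun n p => p.2 (⌈p.1 * 2 ^ n⌉, n) with hFdef
  have heval : Measurable fun q : (((ℤ × ℕ) → ℝ)) × (ℤ × ℕ) => q.1 q.2 :=
    measurable_from_prod_countable_left fun i => measurable_pi_apply i
  have hFmeas : ∀ n, Measurable (F n) := fun n =>
    heval.comp (measurable_snd.prodMk
      (((measurable_fst.mul_const _).ceil).prodMk measurable_const))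
  -- joint law is the product measure
  set Φ : Ω → ℝ × ((ℤ × ℕ) → ℝ) := fun ω => (Θ ω, Y ω) with hΦdef
  have hΦmeas : Measurable Φ := hΘmeas.prodMk hYmeas
  have hindY : IndepFun Θ Y P := by
    have hR : Measurable fun (f : ℝ → ℝ) => (fun p : ℤ × ℕ => f ((p.1 : ℝ) / 2 ^ p.2)) :=
      measurable_pi_lambda _ fun p => measurable_pi_apply _
    exact hind.comp measurable_id hR
  have hmap : P.map Φ = μ.prod ν :=
    (indepFun_iff_map_prod_eq_prod_map_map hΘmeas.aemeasurable hYmeas.aemeasurable).mp hindY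
  -- a.e. convergence of the discretizations on the product space
  have hCmeas : MeasurableSet {p : ℝ × ((ℤ × ℕ) → ℝ) |
      ∃ c, Tendsto (fun n => F n p) atTop (nhds c)} :=
    measurableSet_exists_tendsto hFmeas
  have hCae : ∀ᵐ p ∂(μ.prod ν), ∃ c, Tendsto (fun n => F n p) atTop (nhds c) := by
    rw [ae_iff]
    have hEq : {p : ℝ × ((ℤ × ℕ) → ℝ) | ¬ ∃ c, Tendsto (fun n => F n p) atTop (nhds c)}
        = {p : ℝ × ((ℤ × ℕ) → ℝ) | ∃ c, Tendsto (fun n => F n p) atTop (nhds c)}ᶜ := rfl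
    rw [hEq, Measure.prod_apply hCmeas.compl]
    have hz : ∀ᵐ s ∂μ, ν (Prod.mk s ⁻¹' {p : ℝ × ((ℤ × ℕ) → ℝ) |
        ∃ c, Tendsto (fun n => F n p) atTop (nhds c)}ᶜ) = 0 := by
      filter_upwards [hμpos] with s hs
      rw [hνdef, Measure.map_apply hYmeas (hCmeas.compl.preimage measurable_prodMk_left)]
      rw [measure_eq_zero_iff_ae_notMem]
      filter_upwards [hrc] with ω hω hmem
      exact hmem ⟨ξ s ω, hω s hs.le⟩
    calc ∫⁻ s, ν (Prod.mk s ⁻¹' {p : ℝ × ((ℤ × ℕ) → ℝ) |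
          ∃ c, Tendsto (fun n => F n p) atTop (nhds c)}ᶜ) ∂μ
        = ∫⁻ _, 0 ∂μ := lintegral_congr_ae hz
      _ = 0 := lintegral_zero
  obtain ⟨G, hGmeas, hGtendsto⟩ :=
    measurable_limit_of_tendsto_metrizable_ae (μ := μ.prod ν) (L := atTop)
      (fun n => (hFmeas n).aemeasurable) hCae
  set A : Set (ℝ × ((ℤ × ℕ) → ℝ)) := G ⁻¹' rZ with hAdef
  have hAmeas : MeasurableSet A := hGmeas hrZ
  -- pull the convergence to G back to Ω
  have hDmeas : MeasurableSet {p : ℝ × ((ℤ × ℕ) → ℝ) |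
      Tendsto (fun n => F n p) atTop (nhds (G p))} :=
    measurableSet_tendsto_fun hFmeas hGmeas
  have hDae : ∀ᵐ ω ∂P, Tendsto (fun n => F n (Φ ω)) atTop (nhds (G (Φ ω))) := by
    rw [ae_iff]
    have h0 : (μ.prod ν) {p : ℝ × ((ℤ × ℕ) → ℝ) |
        Tendsto (fun n => F n p) atTop (nhds (G p))}ᶜ = 0 := ae_iff.mp hGtendsto
    have : P (Φ ⁻¹' {p : ℝ × ((ℤ × ℕ) → ℝ) |
        Tendsto (fun n => F n p) atTop (nhds (G p))}ᶜ) = 0 := by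
      rw [← Measure.map_apply hΦmeas hDmeas.compl, hmap]
      exact h0
    exact this
  -- measurability of ω ↦ ξ (Θ ω) ω
  have hmease : Measurable fun ω => ξ (Θ ω) ω :=
    hjoint.comp (hΘmeas.prodMk measurable_id)
  have hae : ∀ᵐ ω ∂P, ξ (Θ ω) ω ∈ rZ :=
    ae_of_prob_eq_one P (hmease hrZ) h
  -- a.e., Φ lands in A
  have hΦA : ∀ᵐ ω ∂P, Φ ω ∈ A := by
    filter_upwards [hDae, hΘpos, hrc, hae] with ω hD hpos hω hk
    have h1 : Tendsto (fun n => F n (Φ ω)) atTop (nhds (ξ (Θ ω) ω)) := hω (Θ ω) hpos.le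
    have h2 : G (Φ ω) = ξ (Θ ω) ω := tendsto_nhds_unique hD h1
    show G (Φ ω) ∈ rZ
    rw [h2]; exact hk
  have hPA : (μ.prod ν) A = 1 := by
    rw [← hmap, Measure.map_apply hΦmeas hAmeas]
    exact prob_eq_one_of_ae P (hΦmeas hAmeas) hΦA
  -- Fubini: a.e. section of A has full ν-measure
  have hsec_meas : Measurable fun s => ν (Prod.mk s ⁻¹' A) :=
    measurable_measure_prodMk_left hAmeas
  have hsec_le : ∀ s, ν (Prod.mk s ⁻¹' A) ≤ 1 := fun s => prob_le_one
  have hint : ∫⁻ s, ν (Prod.mk s ⁻¹' A) ∂μ = 1 := by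
    rw [← Measure.prod_apply hAmeas]; exact hPA
  have hsec1 : ∀ᵐ s ∂μ, ν (Prod.mk s ⁻¹' A) = 1 := by
    have hsub : ∫⁻ s, (1 - ν (Prod.mk s ⁻¹' A)) ∂μ = 0 := by
      rw [lintegral_sub hsec_meas (by rw [hint]; exact ENNReal.one_ne_top)
        (Eventually.of_forall hsec_le), hint, lintegral_one, measure_univ, tsub_self]
    have hz := (lintegral_eq_zero_iff (measurable_const.sub hsec_meas)).mp hsub
    filter_upwards [hz] with s hs
    exact le_antisymm (hsec_le s) (tsub_eq_zero_iff_le.mp hs)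
  have hsecT : ∀ᵐ s ∂μ, ∀ᵐ f ∂ν,
      Tendsto (fun n => F n (s, f)) atTop (nhds (G (s, f))) :=
    Measure.ae_ae_of_ae_prod hGtendsto
  -- conclusion for a.e. time s
  have hQ : ∀ᵐ s ∂μ, 0 < s ∧ P {ω | ∃ k : ℤ, ξ s ω = r * k} = 1 := by
    filter_upwards [hμpos, hsec1, hsecT] with s hs h1 hT
    refine ⟨hs, ?_⟩
    have hT' : ∀ᵐ ω ∂P, Tendsto (fun n => F n (s, Y ω)) atTop (nhds (G (s, Y ω))) :=
      ae_of_ae_map (p := fun f => Tendsto (fun n => F n (s, f)) atTop (nhds (G (s, f))))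
        hYmeas.aemeasurable (by rw [← hνdef]; exact hT)
    have h1' : ∀ᵐ ω ∂P, G (s, Y ω) ∈ rZ := by
      apply ae_of_prob_eq_one P (hYmeas (hAmeas.preimage measurable_prodMk_left))
      rw [← Measure.map_apply hYmeas (hAmeas.preimage measurable_prodMk_left), ← hνdef]
      exact h1
    apply prob_eq_one_of_ae P ((hmeas s) hrZ)
    filter_upwards [hT', h1', hrc] with ω hTω h1ω hrcω
    have h2 : Tendsto (fun n => F n (s, Y ω)) atTop (nhds (ξ s ω)) := hrcω s hs.le
    have h3 : G (s, Y ω) = ξ s ω := tendsto_nhds_unique hTω h2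
    show ξ s ω ∈ rZ
    rw [← h3]; exact h1ω
  -- transfer the μ-null exceptional set to a Lebesgue-null set in (0, ∞)
  set Bad : Set ℝ := {s | ¬ (0 < s ∧ P {ω | ∃ k : ℤ, ξ s ω = r * k} = 1)} with hBaddef
  have hμBad : μ Bad = 0 := ae_iff.mp hQ
  set N := toMeasurable μ Bad with hNdef
  have hNmeas : MeasurableSet N := measurableSet_toMeasurable μ Bad
  have hμN : μ N = 0 := by rw [hNdef, measure_toMeasurable]; exact hμBad
  have hvolN : volume (N ∩ Set.Ioi (0:ℝ)) = 0 := by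
    have hpdf : Measurable (gammaPDF 1 1) := (measurable_gammaPDFReal 1 1).ennreal_ofReal
    have h0 : ∫⁻ x in N, gammaPDF 1 1 x ∂volume = 0 := by
      rw [← withDensity_apply _ hNmeas]
      have hexp : volume.withDensity (gammaPDF 1 1) = μ := hμexp.symm
      rw [hexp]; exact hμN
    have hz := (setLIntegral_eq_zero_iff hNmeas hpdf).mp h0
    rw [measure_eq_zero_iff_ae_notMem]
    filter_upwards [hz] with x hx hmem
    have hpos := gammaPDFReal_pos (a := 1) (r := 1) one_pos one_pos hmem.2
    have := hx hmem.1
    rw [gammaPDF, ENNReal.ofReal_eq_zero] at this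
    linarith
  intro t ht
  -- choosing good times approaching t from the right
  have hex : ∀ n : ℕ, ∃ s, s ∈ Set.Ioo t (t + 1/((n:ℝ)+1)) ∧
      P {ω | ∃ k : ℤ, ξ s ω = r * k} = 1 := by
    intro n
    by_contra hcon
    push_neg at hcon
    have hsub : Set.Ioo t (t + 1/((n:ℝ)+1)) ⊆ N ∩ Set.Ioi 0 := by
      intro s hsmem
      have hs0 : 0 < s := lt_of_le_of_lt ht hsmem.1
      refine ⟨subset_toMeasurable μ Bad ?_, hs0⟩
      intro hQs
      exact hcon s hsmem hQs.2
    have hlt : (0:ℝ≥0∞) < volume (Set.Ioo t (t + 1/((n:ℝ)+1))) := by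
      rw [Real.volume_Ioo]
      apply ENNReal.ofReal_pos.mpr
      have : (0:ℝ) < 1/((n:ℝ)+1) := by positivity
      linarith
    exact absurd ((measure_mono hsub).trans hvolN.le) (not_le.mpr hlt)
  choose sn hsn hQn using hex
  have hsn_tendsto : Tendsto sn atTop (nhdsWithin t (Set.Ici t)) := by
    have h1 : Tendsto (fun n : ℕ => t + 1/((n:ℝ)+1)) atTop (nhds t) := by
      simpa using (tendsto_const_nhds (x := t)).add tendsto_one_div_add_atTop_nhds_zero_nat
    have hlim : Tendsto sn atTop (nhds t) :=
      tendsto_of_tendsto_of_tendsto_of_le_of_le tendsto_const_nhds h1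
        (fun n => (hsn n).1.le) (fun n => (hsn n).2.le)
    exact tendsto_nhdsWithin_iff.mpr ⟨hlim, Eventually.of_forall fun n => (hsn n).1.le⟩
  have haeAll : ∀ᵐ ω ∂P, ∀ n : ℕ, ξ (sn n) ω ∈ rZ := by
    rw [ae_all_iff]
    intro n
    exact ae_of_prob_eq_one P ((hmeas (sn n)) hrZ) (hQn n)
  apply prob_eq_one_of_ae P ((hmeas t) hrZ)
  filter_upwards [haeAll, hcadlag] with ω hk hω
  have htend : Tendsto (fun n => ξ (sn n) ω) atTop (nhds (ξ t ω)) :=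
    ((hω t ht).1.tendsto).comp hsn_tendsto
  exact (isClosed_int_multiples hr.ne').mem_of_tendsto htend
    (Eventually.of_forall fun n => hk n)
end

section
/- Let f ∈ L¹(ℝ) and define its exponential smoothing f̃(t) := ∫_{−∞}^{t} e^{−(t−u)} f(u) du (the convolution of f with the kernel K(t) = e^{−t} 1_{\{t>0\}}). Then f̃ is well defined and continuous on ℝ, and Σ_{n ∈ ℤ} sup_{t ∈ [n, n+1]} |f̃(t)| < ∞ (so that f̃ is directly Riemann integrable). -/
open MeasureTheory Filter Set

lemma key_int {f : ℝ → ℝ} (hf : Integrable f) (s : ℝ) :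
    IntegrableOn (fun u => Real.exp u * f u) (Set.Iic s) := by
  refine Integrable.mono' ((hf.abs.const_mul (Real.exp s)).restrict (s := Set.Iic s))
    ((Real.continuous_exp.aestronglyMeasurable.mul hf.1).restrict) ?_
  refine Filter.eventually_of_mem (self_mem_ae_restrict measurableSet_Iic) (fun u hu => ?_)
  have h1 : Real.exp u ≤ Real.exp s := Real.exp_le_exp.mpr hu
  have h2 : (0:ℝ) ≤ |f u| := abs_nonneg _
  calc ‖Real.exp u * f u‖ = Real.exp u * |f u| := by
        rw [Real.norm_eq_abs, abs_mul, abs_of_pos (Real.exp_pos _)]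
    _ ≤ Real.exp s * |f u| := mul_le_mul_of_nonneg_right h1 h2

lemma key_int2 {f : ℝ → ℝ} (hf : Integrable f) (t s : ℝ) :
    IntegrableOn (fun u => Real.exp (-(t - u)) * f u) (Set.Iic s) := by
  have h := (key_int hf s).const_mul (Real.exp (-t))
  have he : (fun u => Real.exp (-t) * (Real.exp u * f u))
      = fun u => Real.exp (-(t - u)) * f u := by
    funext u
    rw [← mul_assoc, ← Real.exp_add]
    ring_nf
  rwa [he] at h

lemma smoothing_eq {f : ℝ → ℝ} (hf : Integrable f) (t : ℝ) :
    ∫ u in Set.Iic t, Real.exp (-(t - u)) * f u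
      = Real.exp (-t) * ((∫ u in Set.Iic (0:ℝ), Real.exp u * f u)
          + ∫ u in (0:ℝ)..t, Real.exp u * f u) := by
  rw [← intervalIntegral.integral_Iic_sub_Iic (key_int hf 0) (key_int hf t),
    add_sub_cancel]
  rw [show (fun u => Real.exp (-(t - u)) * f u)
      = fun u => Real.exp (-t) * (Real.exp u * f u) from by
    funext u; rw [← mul_assoc, ← Real.exp_add]; ring_nf]
  exact integral_const_mul _ _

lemma smoothing_continuous {f : ℝ → ℝ} (hf : Integrable f) :
    Continuous (fun t : ℝ => ∫ u in Set.Iic t, Real.exp (-(t - u)) * f u) := by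
  have hII : ∀ a b : ℝ, IntervalIntegrable (fun u => Real.exp u * f u) volume a b := by
    intro a b
    rw [intervalIntegrable_iff]
    exact (key_int hf (max a b)).mono_set Set.Ioc_subset_Iic_self
  have hc : Continuous fun t : ℝ => ∫ u in (0:ℝ)..t, Real.exp u * f u :=
    intervalIntegral.continuous_primitive hII 0
  have : (fun t : ℝ => ∫ u in Set.Iic t, Real.exp (-(t - u)) * f u)
      = fun t => Real.exp (-t) * ((∫ u in Set.Iic (0:ℝ), Real.exp u * f u)
          + ∫ u in (0:ℝ)..t, Real.exp u * f u) := funext (smoothing_eq hf)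
  rw [this]
  exact (Real.continuous_exp.comp continuous_neg).mul (continuous_const.add hc)

lemma a_summable {f : ℝ → ℝ} (hf : Integrable f) :
    Summable (fun m : ℤ => ∫ u in Set.Ioc (m:ℝ) (m+1), |f u|) := by
  refine (hasSum_integral_iUnion (μ := volume) (f := fun u => |f u|)
    (s := fun m : ℤ => Set.Ioc (m:ℝ) (m+1)) (fun m => measurableSet_Ioc) ?_ ?_).summable
  · intro i j hij
    simp only [Function.onFun]
    rw [Set.Ioc_disjoint_Ioc]
    rcases hij.lt_or_gt with h | h
    · have h' : (i:ℝ) + 1 ≤ (j:ℝ) := by exact_mod_cast Int.add_one_le_iff.mpr h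
      exact le_trans (min_le_left _ _) (le_trans h' (le_max_right _ _))
    · have h' : (j:ℝ) + 1 ≤ (i:ℝ) := by exact_mod_cast Int.add_one_le_iff.mpr h
      exact le_trans (min_le_right _ _) (le_trans h' (le_max_left _ _))
  · exact hf.abs.integrableOn

lemma iUnion_S (n : ℤ) :
    (⋃ j : ℕ, Set.Ioc ((n:ℝ) - j) ((n:ℝ) - j + 1)) = Set.Iic ((n:ℝ) + 1) := by
  ext u
  simp only [Set.mem_iUnion, Set.mem_Ioc, Set.mem_Iic]
  constructor
  · rintro ⟨j, _, h2⟩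
    have : (0:ℝ) ≤ (j:ℝ) := Nat.cast_nonneg j
    linarith
  · intro hu
    have h0 : (0:ℤ) ≤ ⌊(n:ℝ) - u⌋ + 1 := by
      have : (-1:ℤ) ≤ ⌊(n:ℝ) - u⌋ := by
        rw [Int.le_floor]; push_cast; linarith
      linarith
    refine ⟨(⌊(n:ℝ) - u⌋ + 1).toNat, ?_, ?_⟩
    · have hc : (((⌊(n:ℝ) - u⌋ + 1).toNat : ℕ) : ℝ) = (⌊(n:ℝ) - u⌋ : ℝ) + 1 := by
        rw [← Int.cast_natCast, Int.toNat_of_nonneg h0]; push_cast; ring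
      rw [hc]
      have := Int.lt_floor_add_one ((n:ℝ) - u)
      linarith
    · have hc : (((⌊(n:ℝ) - u⌋ + 1).toNat : ℕ) : ℝ) = (⌊(n:ℝ) - u⌋ : ℝ) + 1 := by
        rw [← Int.cast_natCast, Int.toNat_of_nonneg h0]; push_cast; ring
      rw [hc]
      have := Int.floor_le ((n:ℝ) - u)
      linarith

lemma S_disjoint (n : ℤ) :
    Pairwise (Function.onFun Disjoint fun j : ℕ => Set.Ioc ((n:ℝ) - j) ((n:ℝ) - j + 1)) := by
  intro i j hij
  simp only [Function.onFun]
  rw [Set.Ioc_disjoint_Ioc]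
  rcases hij.lt_or_gt with h | h
  · have h' : (i:ℝ) + 1 ≤ (j:ℝ) := by exact_mod_cast Nat.succ_le_of_lt h
    have : (n:ℝ) - j + 1 ≤ (n:ℝ) - i := by linarith
    exact le_trans (min_le_right _ _) (le_trans this (le_max_left _ _))
  · have h' : (j:ℝ) + 1 ≤ (i:ℝ) := by exact_mod_cast Nat.succ_le_of_lt h
    have : (n:ℝ) - i + 1 ≤ (n:ℝ) - j := by linarith
    exact le_trans (min_le_left _ _) (le_trans this (le_max_right _ _))

lemma exp_summable : Summable (fun j : ℕ => Real.exp (1 - j)) := by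
  have he : (fun j : ℕ => Real.exp (1 - j)) = fun j => Real.exp 1 * (Real.exp (-1)) ^ j := by
    funext j
    rw [← Real.exp_nat_mul, ← Real.exp_add]
    ring_nf
  rw [he]
  exact (summable_geometric_of_lt_one (Real.exp_pos _).le
    (Real.exp_lt_one_iff.mpr (by norm_num))).mul_left _

lemma double_summable {a : ℤ → ℝ} (ha : Summable a) (ha0 : ∀ m, 0 ≤ a m) :
    Summable (fun p : ℤ × ℕ => Real.exp (1 - p.2) * a (p.1 - p.2)) := by
  have hG : Summable (fun q : ℕ × ℤ => Real.exp (1 - q.1) * a q.2) := by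
    apply summable_mul_of_summable_norm (f := fun j : ℕ => Real.exp (1 - j)) (g := a)
    · simpa [Real.norm_eq_abs, abs_of_pos (Real.exp_pos _)] using exp_summable
    · simpa [Real.norm_eq_abs, fun m => abs_of_nonneg (ha0 m)] using ha
  let e : ℤ × ℕ ≃ ℕ × ℤ :=
    { toFun := fun p => (p.2, p.1 - p.2)
      invFun := fun q => (q.2 + q.1, q.1)
      left_inv := fun p => by simp
      right_inv := fun q => by simp }
  exact e.summable_iff.mpr hG

lemma sup_bound {f : ℝ → ℝ} (hf : Integrable f) (n : ℤ) (t : ℝ)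
    (ht : t ∈ Set.Icc (n:ℝ) ((n:ℝ) + 1))
    (hBs : Summable fun j : ℕ =>
      Real.exp (1 - j) * ∫ u in Set.Ioc ((n - j : ℤ) : ℝ) (((n - j : ℤ) : ℝ) + 1), |f u|) :
    |∫ u in Set.Iic t, Real.exp (-(t - u)) * f u|
      ≤ ∑' j : ℕ,
        Real.exp (1 - j) * ∫ u in Set.Ioc ((n - j : ℤ) : ℝ) (((n - j : ℤ) : ℝ) + 1), |f u| := by
  obtain ⟨htn, htn1⟩ := ht
  have hg_int : IntegrableOn (fun u => Real.exp (-(t - u)) * |f u|) (Set.Iic ((n:ℝ) + 1)) :=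
    key_int2 hf.abs t _
  have h1 : |∫ u in Set.Iic t, Real.exp (-(t - u)) * f u|
      ≤ ∫ u in Set.Iic t, Real.exp (-(t - u)) * |f u| := by
    calc |∫ u in Set.Iic t, Real.exp (-(t - u)) * f u|
        = ‖∫ u in Set.Iic t, Real.exp (-(t - u)) * f u‖ := (Real.norm_eq_abs _).symm
      _ ≤ ∫ u in Set.Iic t, ‖Real.exp (-(t - u)) * f u‖ := norm_integral_le_integral_norm _
      _ = ∫ u in Set.Iic t, Real.exp (-(t - u)) * |f u| := by
          refine integral_congr_ae (Eventually.of_forall fun u => ?_)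
          simp only [Real.norm_eq_abs, abs_mul, abs_of_pos (Real.exp_pos _)]
  have h2 : ∫ u in Set.Iic t, Real.exp (-(t - u)) * |f u|
      ≤ ∫ u in Set.Iic ((n:ℝ) + 1), Real.exp (-(t - u)) * |f u| := by
    refine setIntegral_mono_set hg_int
      (Eventually.of_forall fun u => mul_nonneg (Real.exp_pos _).le (abs_nonneg _))
      (HasSubset.Subset.eventuallyLE (Set.Iic_subset_Iic.mpr htn1))
  have hSum : HasSum (fun j : ℕ => ∫ u in Set.Ioc ((n:ℝ) - j) ((n:ℝ) - j + 1),
      Real.exp (-(t - u)) * |f u|)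
      (∫ u in Set.Iic ((n:ℝ) + 1), Real.exp (-(t - u)) * |f u|) := by
    have h := hasSum_integral_iUnion (μ := volume)
      (f := fun u => Real.exp (-(t - u)) * |f u|)
      (s := fun j : ℕ => Set.Ioc ((n:ℝ) - j) ((n:ℝ) - j + 1))
      (fun j => measurableSet_Ioc) (S_disjoint n) (by rw [iUnion_S n]; exact hg_int)
    rwa [iUnion_S n] at h
  have h3 : ∀ j : ℕ, (∫ u in Set.Ioc ((n:ℝ) - j) ((n:ℝ) - j + 1), Real.exp (-(t - u)) * |f u|)
      ≤ Real.exp (1 - j) * ∫ u in Set.Ioc ((n - j : ℤ) : ℝ) (((n - j : ℤ) : ℝ) + 1), |f u| := by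
    intro j
    have hcast : ((n - j : ℤ) : ℝ) = (n:ℝ) - j := by push_cast; ring
    have hsub : Set.Ioc ((n:ℝ) - j) ((n:ℝ) - j + 1) ⊆ Set.Iic ((n:ℝ) + 1) := by
      intro u hu
      have hj : (0:ℝ) ≤ (j:ℝ) := Nat.cast_nonneg j
      have := hu.2
      simp only [Set.mem_Iic]
      linarith
    have hle : (∫ u in Set.Ioc ((n:ℝ) - j) ((n:ℝ) - j + 1), Real.exp (-(t - u)) * |f u|)
        ≤ ∫ u in Set.Ioc ((n:ℝ) - j) ((n:ℝ) - j + 1), Real.exp (1 - j) * |f u| := by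
      refine setIntegral_mono_on (hg_int.mono_set hsub)
        ((hf.abs.integrableOn).const_mul _) measurableSet_Ioc (fun u hu => ?_)
      have h4 : -(t - u) ≤ 1 - (j:ℝ) := by
        have := hu.2
        linarith
      exact mul_le_mul_of_nonneg_right (Real.exp_le_exp.mpr h4) (abs_nonneg _)
    calc (∫ u in Set.Ioc ((n:ℝ) - j) ((n:ℝ) - j + 1), Real.exp (-(t - u)) * |f u|)
        ≤ ∫ u in Set.Ioc ((n:ℝ) - j) ((n:ℝ) - j + 1), Real.exp (1 - j) * |f u| := hle
      _ = Real.exp (1 - j) * ∫ u in Set.Ioc ((n:ℝ) - j) ((n:ℝ) - j + 1), |f u| :=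
          integral_const_mul _ _
      _ = Real.exp (1 - j) * ∫ u in Set.Ioc ((n - j : ℤ) : ℝ) (((n - j : ℤ) : ℝ) + 1), |f u| := by
          rw [hcast]
  calc |∫ u in Set.Iic t, Real.exp (-(t - u)) * f u|
      ≤ ∫ u in Set.Iic ((n:ℝ) + 1), Real.exp (-(t - u)) * |f u| := h1.trans h2
    _ = ∑' j : ℕ, ∫ u in Set.Ioc ((n:ℝ) - j) ((n:ℝ) - j + 1), Real.exp (-(t - u)) * |f u| :=
        hSum.tsum_eq.symm
    _ ≤ _ := Summable.tsum_le_tsum h3 hSum.summable hBs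

/-- If `f ∈ L¹ (ℝ)`, then its exponential smoothing
`f̃ (t) = ∫_{-∞}^t exp (-(t-u)) f (u) du` is well defined and continuous, and
`Σ_{n ∈ ℤ} sup_{t ∈ [n, n+1]} |f̃ (t)| < ∞`, i.e. `f̃` is directly Riemann integrable. -/
theorem smoothing_directly_riemann_integrable
    (f : ℝ → ℝ) (hf : Integrable f) :
    (∀ t : ℝ, IntegrableOn (fun u => Real.exp (-(t - u)) * f u) (Set.Iic t)) ∧
    Continuous (fun t : ℝ => ∫ u in Set.Iic t, Real.exp (-(t - u)) * f u) ∧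
    Summable (fun n : ℤ =>
      ⨆ t : Set.Icc (n : ℝ) (n + 1),
        |∫ u in Set.Iic (t : ℝ), Real.exp (-((t : ℝ) - u)) * f u|) := by
  refine ⟨fun t => key_int2 hf t t, smoothing_continuous hf, ?_⟩
  have ha0 : ∀ m : ℤ, 0 ≤ ∫ u in Set.Ioc (m:ℝ) ((m:ℝ) + 1), |f u| :=
    fun m => setIntegral_nonneg measurableSet_Ioc fun u _ => abs_nonneg _
  have hd := double_summable (a_summable hf) ha0
  have hpair := (summable_prod_of_nonneg
    (fun p : ℤ × ℕ => mul_nonneg (Real.exp_pos _).le (ha0 _))).mp hd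
  haveI : ∀ n : ℤ, Nonempty (Set.Icc (n:ℝ) ((n:ℝ) + 1)) := fun n =>
    Set.Nonempty.to_subtype (Set.nonempty_Icc.mpr (by linarith))
  refine Summable.of_nonneg_of_le (fun n => Real.iSup_nonneg fun t => abs_nonneg _)
    (fun n => ?_) hpair.2
  exact ciSup_le fun t => sup_bound hf n (t : ℝ) t.2 (hpair.1 n)
end
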